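/- arXiv:1501.02966 — 2 statements merged into one kernel-verified Lean document; each statement's English description precedes it below -/
import Mathlib

section
/- The anisotropic random walk on Z^2 with parameters (p_j) is recurrent (i.e., almost surely returns to the origin infinitely often) provided that the sum over k >= 0 of the reciprocals (sum_{j=-k}^{k} 1/p_j)^{-1} diverges, i.e., sum_{k=0}^{infinity} ( sum_{j=-k}^{k} 1/p_j )^{-1} = infinity. -/
open MeasureTheory ProbabilityTheory Filter Asymptotics Set

noncomputable section

/-- One-step transition probabilities of the anisotropic random walk on `ℤ²`
with parameters `p`. -/
def aniTransProb (p : ℤ → ℝ) (u v : ℤ × ℤ) : ℝ :=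
  if v = (u.1 + 1, u.2) ∨ v = (u.1 - 1, u.2) then 1 / 2 - p u.2
  else if v = (u.1, u.2 + 1) ∨ v = (u.1, u.2 - 1) then p u.2
  else 0

/-- `C` is an anisotropic random walk on `ℤ²` with parameters `p`, under the
probability measure `P`: it starts at the origin and has the Markov transition
probabilities `aniTransProb p`. -/
structure IsAnisotropicWalk {Ω : Type*} [MeasurableSpace Ω]
    (p : ℤ → ℝ) (P : Measure Ω) (C : ℕ → Ω → ℤ × ℤ) : Prop where
  meas : ∀ n, Measurable (C n)
  init : ∀ ω, C 0 ω = (0, 0)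
  step : ∀ (N : ℕ) (h : ℕ → ℤ × ℤ) (v : ℤ × ℤ),
    P {ω | (∀ i ≤ N, C i ω = h i) ∧ C (N + 1) ω = v}
      = ENNReal.ofReal (aniTransProb p (h N) v) * P {ω | ∀ i ≤ N, C i ω = h i}

/-- `S` is a simple symmetric random walk on `ℤ`: `S 0 = 0` and the increments
are i.i.d. with values `±1`, each with probability `1/2`. -/
structure IsSSRW {Ω : Type*} [MeasurableSpace Ω] (P : Measure Ω)
    (S : ℕ → Ω → ℤ) : Prop where
  meas : ∀ n, Measurable (S n)
  init : ∀ ω, S 0 ω = 0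
  indep : iIndepFun
    (fun n ω => S (n + 1) ω - S n ω) P
  plus : ∀ n, P {ω | S (n + 1) ω - S n ω = 1} = 1 / 2
  minus : ∀ n, P {ω | S (n + 1) ω - S n ω = -1} = 1 / 2

/-- `W` is a standard Wiener process (Brownian motion): it starts at `0`, has
continuous paths on `[0,∞)`, independent increments, and its increments over
`[s,t]` are centered Gaussian with variance `t - s`. -/
structure IsBrownianMotion {Ω : Type*} [MeasurableSpace Ω] (P : Measure Ω)
    (W : ℝ → Ω → ℝ) : Prop where
  meas : ∀ t, Measurable (W t)
  init : ∀ ω, W 0 ω = 0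
  cont : ∀ ω, ContinuousOn (fun t => W t ω) (Set.Ici 0)
  gauss : ∀ s t : ℝ, 0 ≤ s → s ≤ t →
    Measure.map (fun ω => W t ω - W s ω) P = gaussianReal 0 (Real.toNNReal (t - s))
  indepIncr : ∀ t : ℕ → ℝ, Monotone t → 0 ≤ t 0 →
    iIndepFun
      (fun i ω => W (t (i + 1)) ω - W (t i) ω) P

end

noncomputable section

namespace Aniso
open scoped Classical

abbrev V := ℤ × ℤ

def O : V := (0,0)

variable (p : ℤ → ℝ)

/-- the one-step averaging operator -/
def L (f : V → ℝ) (x : V) : ℝ :=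
  (1/2 - p x.2) * (f (x.1+1, x.2) + f (x.1-1, x.2)) +
    p x.2 * (f (x.1, x.2+1) + f (x.1, x.2-1))

variable {p}

lemma L_mono (hp1 : ∀ j, 0 < p j) (hp2 : ∀ j, p j ≤ 1/2) {f g : V → ℝ}
    (h : ∀ y, f y ≤ g y) (x : V) : L p f x ≤ L p g x := by
  unfold L
  have h1 : (0:ℝ) ≤ 1/2 - p x.2 := by linarith [hp2 x.2]
  have h2 : (0:ℝ) ≤ p x.2 := (hp1 x.2).le
  have := h (x.1+1, x.2); have := h (x.1-1, x.2)
  have := h (x.1, x.2+1); have := h (x.1, x.2-1)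
  nlinarith

lemma L_nonneg (hp1 : ∀ j, 0 < p j) (hp2 : ∀ j, p j ≤ 1/2) {f : V → ℝ}
    (h : ∀ y, 0 ≤ f y) (x : V) : 0 ≤ L p f x := by
  unfold L
  have h1 : (0:ℝ) ≤ 1/2 - p x.2 := by linarith [hp2 x.2]
  have h2 : (0:ℝ) ≤ p x.2 := (hp1 x.2).le
  have := h (x.1+1, x.2); have := h (x.1-1, x.2)
  have := h (x.1, x.2+1); have := h (x.1, x.2-1)
  nlinarith

lemma L_const (c : ℝ) (x : V) : L p (fun _ => c) x = c := by
  unfold L; ring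

lemma L_le_one (hp1 : ∀ j, 0 < p j) (hp2 : ∀ j, p j ≤ 1/2) {f : V → ℝ}
    (h : ∀ y, f y ≤ 1) (x : V) : L p f x ≤ 1 := by
  have := L_mono hp1 hp2 h x
  rwa [L_const] at this

/-- kill at the origin -/
def Zf (f : V → ℝ) (x : V) : ℝ := if x = O then 0 else f x

variable (p)

/-- finite-horizon avoidance function: `u m x` is the probability that the
walk started at `x` avoids the origin at times `1,…,m`. -/
def u : ℕ → V → ℝ
  | 0 => fun _ => 1
  | (m+1) => fun x => L p (Zf (u m)) x

/-- membership in the box of radius n -/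
def Dn (n : ℕ) (x : V) : Prop := x.1.natAbs ≤ n ∧ x.2.natAbs ≤ n

/-- finite-horizon escape iteration on the box of radius `n`. -/
def w (n : ℕ) : ℕ → V → ℝ
  | 0 => fun x => if x = O then 0 else 1
  | (m+1) => fun x => if x ≠ O ∧ Dn n x then L p (w n m) x else (if x = O then 0 else 1)

variable {p}

lemma w_O (n m : ℕ) : w p n m O = 0 := by
  cases m <;> simp [w]

lemma u_nonneg (hp1 : ∀ j, 0 < p j) (hp2 : ∀ j, p j ≤ 1/2) :
    ∀ m x, 0 ≤ u p m x := by
  intro m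
  induction m with
  | zero => intro x; norm_num [u]
  | succ m ih =>
    intro x
    refine L_nonneg hp1 hp2 (fun y => ?_) x
    unfold Zf; split
    · exact le_rfl
    · exact ih y

lemma u_le_one (hp1 : ∀ j, 0 < p j) (hp2 : ∀ j, p j ≤ 1/2) :
    ∀ m x, u p m x ≤ 1 := by
  intro m
  induction m with
  | zero => intro x; norm_num [u]
  | succ m ih =>
    intro x
    refine L_le_one hp1 hp2 (fun y => ?_) x
    unfold Zf; split
    · norm_num
    · exact ih y

lemma Zf_le_Zf {f g : V → ℝ} (hg : ∀ y, 0 ≤ g y) (h : ∀ y, f y ≤ g y) (y : V) :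
    Zf f y ≤ Zf g y := by
  unfold Zf; split
  · rfl
  · exact h y

lemma u_anti (hp1 : ∀ j, 0 < p j) (hp2 : ∀ j, p j ≤ 1/2) :
    ∀ m x, u p (m+1) x ≤ u p m x := by
  intro m
  induction m with
  | zero =>
    intro x
    have h0 : u p 0 x = 1 := rfl
    rw [h0]
    exact u_le_one hp1 hp2 _ x
  | succ m ih =>
    intro x
    show L p (Zf (u p (m+1))) x ≤ L p (Zf (u p m)) x
    exact L_mono hp1 hp2 (Zf_le_Zf (u_nonneg hp1 hp2 m) ih) x

lemma w_nonneg (hp1 : ∀ j, 0 < p j) (hp2 : ∀ j, p j ≤ 1/2) (n : ℕ) :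
    ∀ m x, 0 ≤ w p n m x := by
  intro m
  induction m with
  | zero => intro x; unfold w; split <;> norm_num
  | succ m ih =>
    intro x
    unfold w; split
    · exact L_nonneg hp1 hp2 ih x
    · split <;> norm_num

lemma w_le_one (hp1 : ∀ j, 0 < p j) (hp2 : ∀ j, p j ≤ 1/2) (n : ℕ) :
    ∀ m x, w p n m x ≤ 1 := by
  intro m
  induction m with
  | zero => intro x; unfold w; split <;> norm_num
  | succ m ih =>
    intro x
    unfold w; split
    · exact L_le_one hp1 hp2 ih x
    · split <;> norm_num

lemma w_anti (hp1 : ∀ j, 0 < p j) (hp2 : ∀ j, p j ≤ 1/2) (n : ℕ) :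
    ∀ m x, w p n (m+1) x ≤ w p n m x := by
  intro m
  induction m with
  | zero =>
    intro x
    by_cases hx : x = O
    · rw [hx, w_O, w_O]
    · have h0 : w p n 0 x = 1 := by unfold w; rw [if_neg hx]
      rw [h0]
      show (if x ≠ O ∧ Dn n x then L p (w p n 0) x else (if x = O then 0 else 1)) ≤ 1
      split
      · exact L_le_one hp1 hp2 (w_le_one hp1 hp2 n 0) x
      · norm_num
  | succ m ih =>
    intro x
    show (if x ≠ O ∧ Dn n x then L p (w p n (m+1)) x else _) ≤
      (if x ≠ O ∧ Dn n x then L p (w p n m) x else _)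
    split
    · exact L_mono hp1 hp2 ih x
    · exact le_rfl

lemma u_le_w (hp1 : ∀ j, 0 < p j) (hp2 : ∀ j, p j ≤ 1/2) (n : ℕ) :
    ∀ m x, Zf (u p m) x ≤ w p n m x := by
  intro m
  induction m with
  | zero =>
    intro x
    unfold Zf w; split <;> simp [u]
  | succ m ih =>
    intro x
    by_cases hx : x = O
    · rw [hx, w_O]
      simp [Zf]
    · have hval : Zf (u p (m+1)) x = L p (Zf (u p m)) x := by
        simp [Zf, hx, u]
      rw [hval]
      show _ ≤ w p n (m+1) x
      unfold w; split
      · exact L_mono hp1 hp2 ih x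
      · refine le_trans (L_le_one hp1 hp2 (fun y => ?_) x) (by norm_num [hx])
        unfold Zf; split
        · norm_num
        · exact u_le_one hp1 hp2 m y

variable (p)

/-- harmonic escape potential on box `n` -/
def v (n : ℕ) (x : V) : ℝ := ⨅ m, w p n m x

variable {p}

lemma w_bdd (hp1 : ∀ j, 0 < p j) (hp2 : ∀ j, p j ≤ 1/2) (n : ℕ) (x : V) :
    BddBelow (Set.range fun m => w p n m x) := by
  refine ⟨0, ?_⟩
  rintro y ⟨m, rfl⟩
  exact w_nonneg hp1 hp2 n m x

lemma w_antitone (hp1 : ∀ j, 0 < p j) (hp2 : ∀ j, p j ≤ 1/2) (n : ℕ) (x : V) :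
    Antitone fun m => w p n m x :=
  antitone_nat_of_succ_le fun m => w_anti hp1 hp2 n m x

lemma tendsto_w (hp1 : ∀ j, 0 < p j) (hp2 : ∀ j, p j ≤ 1/2) (n : ℕ) (x : V) :
    Tendsto (fun m => w p n m x) atTop (nhds (v p n x)) :=
  tendsto_atTop_ciInf (w_antitone hp1 hp2 n x) (w_bdd hp1 hp2 n x)

lemma v_le_w (hp1 : ∀ j, 0 < p j) (hp2 : ∀ j, p j ≤ 1/2) (n m : ℕ) (x : V) :
    v p n x ≤ w p n m x :=
  ciInf_le (w_bdd hp1 hp2 n x) m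

lemma v_nonneg (hp1 : ∀ j, 0 < p j) (hp2 : ∀ j, p j ≤ 1/2) (n : ℕ) (x : V) :
    0 ≤ v p n x :=
  le_ciInf fun m => w_nonneg hp1 hp2 n m x

lemma v_le_one (hp1 : ∀ j, 0 < p j) (hp2 : ∀ j, p j ≤ 1/2) (n : ℕ) (x : V) :
    v p n x ≤ 1 :=
  le_trans (v_le_w hp1 hp2 n 0 x) (w_le_one hp1 hp2 n 0 x)

lemma v_O (hp1 : ∀ j, 0 < p j) (hp2 : ∀ j, p j ≤ 1/2) (n : ℕ) : v p n O = 0 := by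
  refine le_antisymm ?_ (v_nonneg hp1 hp2 n O)
  have := v_le_w hp1 hp2 n 0 O
  rwa [w_O] at this

lemma O_mem_Dn (n : ℕ) : Dn n O := by constructor <;> simp [O]

lemma w_out (n m : ℕ) {x : V} (h : ¬ Dn n x) : w p n m x = 1 := by
  have hx : x ≠ O := fun hc => h (hc ▸ O_mem_Dn n)
  cases m with
  | zero => unfold w; rw [if_neg hx]
  | succ m =>
    unfold w
    rw [if_neg (by tauto), if_neg hx]

lemma v_out (n : ℕ) {x : V} (h : ¬ Dn n x) : v p n x = 1 := by
  unfold v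
  simp [w_out n _ h]

lemma v_harm (hp1 : ∀ j, 0 < p j) (hp2 : ∀ j, p j ≤ 1/2) (n : ℕ) {x : V}
    (hx : x ≠ O) (hD : Dn n x) : v p n x = L p (v p n) x := by
  have h1 : Tendsto (fun m => w p n (m+1) x) atTop (nhds (v p n x)) :=
    (tendsto_w hp1 hp2 n x).comp (tendsto_add_atTop_nat 1)
  have h2 : ∀ m, w p n (m+1) x = L p (w p n m) x := by
    intro m
    show (if x ≠ O ∧ Dn n x then L p (w p n m) x else _) = _
    rw [if_pos ⟨hx, hD⟩]
  have h3 : Tendsto (fun m => L p (w p n m) x) atTop (nhds (L p (v p n) x)) := by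
    unfold L
    exact (((tendsto_w hp1 hp2 n _).add (tendsto_w hp1 hp2 n _)).const_mul _).add
      (((tendsto_w hp1 hp2 n _).add (tendsto_w hp1 hp2 n _)).const_mul _)
  exact tendsto_nhds_unique (h1.congr fun m => h2 m) h3

section Currents

variable (p)

/-- horizontal conductance on row `j` -/
def ch (j : ℤ) : ℝ := (1/2 - p j) / p j

/-- horizontal current on the edge `(k,j) → (k+1,j)` -/
def ihc (n : ℕ) (k j : ℤ) : ℝ := ch p j * (v p n (k,j) - v p n (k+1,j))

/-- vertical current on the edge `(k,j) → (k,j+1)` -/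
def ivc (n : ℕ) (k j : ℤ) : ℝ := v p n (k,j) - v p n (k,j+1)

/-- discrete divergence of the current field -/
def dvg (n : ℕ) (x : V) : ℝ :=
  ihc p n x.1 x.2 - ihc p n (x.1-1) x.2 + ivc p n x.1 x.2 - ivc p n x.1 (x.2-1)

/-- total current flowing out of the origin -/
def theta (n : ℕ) : ℝ := (p 0)⁻¹ * L p (v p n) O

variable {p}

lemma ch_nonneg (hp1 : ∀ j, 0 < p j) (hp2 : ∀ j, p j ≤ 1/2) (j : ℤ) :
    0 ≤ ch p j := by
  unfold ch
  exact div_nonneg (by linarith [hp2 j]) (hp1 j).le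

lemma dvg_eq (hp1 : ∀ j, 0 < p j) (n : ℕ) (x : V) :
    dvg p n x = (p x.2)⁻¹ * (v p n x - L p (v p n) x) := by
  obtain ⟨k, j⟩ := x
  have hpj : p j ≠ 0 := ne_of_gt (hp1 j)
  unfold dvg ihc ivc ch L
  simp only [sub_add_cancel]
  field_simp
  ring

lemma dvg_zero (hp1 : ∀ j, 0 < p j) (hp2 : ∀ j, p j ≤ 1/2) (n : ℕ) {x : V}
    (hx : x ≠ O) (hD : Dn n x) : dvg p n x = 0 := by
  rw [dvg_eq hp1, ← v_harm hp1 hp2 n hx hD]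
  ring

lemma dvg_O (hp1 : ∀ j, 0 < p j) (hp2 : ∀ j, p j ≤ 1/2) (n : ℕ) :
    dvg p n O = - theta p n := by
  rw [dvg_eq hp1, v_O hp1 hp2]
  unfold theta O
  ring

lemma theta_nonneg (hp1 : ∀ j, 0 < p j) (hp2 : ∀ j, p j ≤ 1/2) (n : ℕ) :
    0 ≤ theta p n := by
  unfold theta
  have := L_nonneg hp1 hp2 (fun y => v_nonneg hp1 hp2 n y) O
  have := hp1 0
  positivity

lemma ih_zero (n : ℕ) {k j : ℤ} (h1 : ¬ Dn n (k,j)) (h2 : ¬ Dn n (k+1,j)) :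
    ihc p n k j = 0 := by
  unfold ihc
  rw [v_out n h1, v_out n h2]
  ring

lemma iv_zero (n : ℕ) {k j : ℤ} (h1 : ¬ Dn n (k,j)) (h2 : ¬ Dn n (k,j+1)) :
    ivc p n k j = 0 := by
  unfold ivc
  rw [v_out n h1, v_out n h2]
  ring

lemma dvg_far (hp1 : ∀ j, 0 < p j) (n : ℕ) {x : V} (h : ¬ Dn (n+1) x) :
    dvg p n x = 0 := by
  obtain ⟨k, j⟩ := x
  have hD : ¬ (k.natAbs ≤ n+1 ∧ j.natAbs ≤ n+1) := h
  have h0 : ¬ Dn n (k,j) := by unfold Dn at *; simp_all; omega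
  have h1 : ¬ Dn n (k+1,j) := by unfold Dn at *; simp_all; omega
  have h2 : ¬ Dn n (k-1,j) := by unfold Dn at *; simp_all; omega
  have h3 : ¬ Dn n (k,j+1) := by unfold Dn at *; simp_all; omega
  have h4 : ¬ Dn n (k,j-1) := by unfold Dn at *; simp_all; omega
  rw [dvg_eq hp1]
  unfold L
  simp only []
  rw [v_out n h0, v_out n h1, v_out n h2, v_out n h3, v_out n h4]
  ring

end Currents

section Boxes

/-- square box of radius `R` as a finset -/
def box (R : ℤ) : Finset V := Finset.Icc (-R) R ×ˢ Finset.Icc (-R) R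

lemma mem_box {R : ℤ} {x : V} :
    x ∈ box R ↔ (-R ≤ x.1 ∧ x.1 ≤ R) ∧ (-R ≤ x.2 ∧ x.2 ≤ R) := by
  simp [box, Finset.mem_product, Finset.mem_Icc, and_assoc]

lemma not_Dn {n : ℕ} {k j : ℤ} (h : n < k.natAbs ∨ n < j.natAbs) : ¬ Dn n (k,j) := by
  unfold Dn
  omega

lemma Dn_of {n : ℕ} {k j : ℤ} (h1 : k.natAbs ≤ n) (h2 : j.natAbs ≤ n) : Dn n (k,j) := by
  unfold Dn
  exact ⟨h1, h2⟩

/-- telescoping sum over an integer interval -/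
lemma telescope (f : ℤ → ℝ) (a : ℤ) : ∀ b, a ≤ b →
    ∑ k ∈ Finset.Icc a b, (f k - f (k-1)) = f b - f (a-1) := by
  refine Int.le_induction ?_ ?_
  · rw [Finset.Icc_self, Finset.sum_singleton]
  · intro b hb ih
    have hins : Finset.Icc a (b+1) = insert (b+1) (Finset.Icc a b) := by
      ext t; simp only [Finset.mem_Icc, Finset.mem_insert]; omega
    rw [hins, Finset.sum_insert (by simp only [Finset.mem_Icc]; omega), ih]
    simp only [add_sub_cancel_right]
    ring

/-- Abel summation over an integer interval -/
lemma abel (f g : ℤ → ℝ) (a : ℤ) : ∀ b, a ≤ b →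
    ∑ k ∈ Finset.Icc a b, f k * (g k - g (k+1)) =
      (∑ k ∈ Finset.Icc a b, g k * (f k - f (k-1))) - f b * g (b+1) + f (a-1) * g a := by
  refine Int.le_induction ?_ ?_
  · simp only [Finset.Icc_self, Finset.sum_singleton]
    ring
  · intro b hb ih
    have hins : Finset.Icc a (b+1) = insert (b+1) (Finset.Icc a b) := by
      ext t; simp only [Finset.mem_Icc, Finset.mem_insert]; omega
    have hnm : (b+1) ∉ Finset.Icc a b := by simp only [Finset.mem_Icc]; omega
    rw [hins, Finset.sum_insert hnm, Finset.sum_insert hnm, ih]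
    simp only [add_sub_cancel_right]
    ring

variable {n : ℕ}

lemma ih_zero' (hp1 : ∀ j, 0 < p j) (hp2 : ∀ j, p j ≤ 1/2) {k j : ℤ}
    (h : (n:ℤ) + 1 ≤ k ∨ k ≤ -(n:ℤ) - 2 ∨ n + 1 ≤ j.natAbs) : ihc p n k j = 0 := by
  refine ih_zero n (not_Dn ?_) (not_Dn ?_) <;> omega

lemma iv_zero' (hp1 : ∀ j, 0 < p j) (hp2 : ∀ j, p j ≤ 1/2) {k j : ℤ}
    (h : (n:ℤ) + 1 ≤ j ∨ j ≤ -(n:ℤ) - 2 ∨ n + 1 ≤ k.natAbs) : ivc p n k j = 0 := by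
  refine iv_zero n (not_Dn ?_) (not_Dn ?_) <;> omega

lemma sum_div_box (hp1 : ∀ j, 0 < p j) (R : ℤ) (hR : 0 ≤ R) :
    ∑ x ∈ box R, dvg p n x =
      (∑ j ∈ Finset.Icc (-R) R, (ihc p n R j - ihc p n (-R-1) j)) +
      (∑ k ∈ Finset.Icc (-R) R, (ivc p n k R - ivc p n k (-R-1))) := by
  have hsplit : ∀ x : V, dvg p n x =
      (ihc p n x.1 x.2 - ihc p n (x.1-1) x.2) + (ivc p n x.1 x.2 - ivc p n x.1 (x.2-1)) := by
    intro x; unfold dvg; ring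
  rw [Finset.sum_congr rfl (fun x _ => hsplit x), Finset.sum_add_distrib]
  congr 1
  · unfold box
    rw [Finset.sum_product_right]
    refine Finset.sum_congr rfl (fun j _ => ?_)
    have := telescope (fun k => ihc p n k j) (-R) R (by omega)
    simpa using this
  · unfold box
    rw [Finset.sum_product]
    refine Finset.sum_congr rfl (fun k _ => ?_)
    have := telescope (fun j => ivc p n k j) (-R) R (by omega)
    simpa using this

lemma sum_div_inner (hp1 : ∀ j, 0 < p j) (hp2 : ∀ j, p j ≤ 1/2)
    {m : ℤ} (h0 : 0 ≤ m) (hmn : m ≤ (n:ℤ)) :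
    ∑ x ∈ box m, dvg p n x = - theta p n := by
  rw [Finset.sum_eq_single O]
  · exact dvg_O hp1 hp2 n
  · intro x hx hxO
    refine dvg_zero hp1 hp2 n hxO ?_
    rw [mem_box] at hx
    obtain ⟨k, j⟩ := x
    exact Dn_of (by simp at hx ⊢; omega) (by simp at hx ⊢; omega)
  · intro h
    exact absurd (mem_box.mpr (by unfold O; constructor <;> constructor <;> omega)) h

lemma sum_div_outer (hp1 : ∀ j, 0 < p j) (hp2 : ∀ j, p j ≤ 1/2) :
    ∑ x ∈ box ((n:ℤ)+1), dvg p n x = 0 := by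
  rw [sum_div_box hp1 _ (by omega)]
  rw [Finset.sum_eq_zero, Finset.sum_eq_zero]
  · ring
  · intro k _
    rw [iv_zero' hp1 hp2 (by omega), iv_zero' hp1 hp2 (by omega)]
    ring
  · intro j _
    rw [ih_zero' hp1 hp2 (by omega), ih_zero' hp1 hp2 (by omega)]
    ring

variable (p n)

/-- the rectangle `[-(n+2), n+1]²` -/
def Q : Finset V := Finset.Icc (-(n:ℤ)-2) ((n:ℤ)+1) ×ˢ Finset.Icc (-(n:ℤ)-2) ((n:ℤ)+1)

/-- total Dirichlet energy of `v n` -/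
def eTot : ℝ := ∑ x ∈ Q n,
  (ch p x.2 * (v p n x - v p n (x.1+1, x.2))^2 + (v p n x - v p n (x.1, x.2+1))^2)

variable {p n}

lemma eTot_nonneg (hp1 : ∀ j, 0 < p j) (hp2 : ∀ j, p j ≤ 1/2) : 0 ≤ eTot p n := by
  refine Finset.sum_nonneg fun x _ => ?_
  have := ch_nonneg hp1 hp2 x.2
  positivity

lemma green (hp1 : ∀ j, 0 < p j) (hp2 : ∀ j, p j ≤ 1/2) : eTot p n = theta p n := by
  classical
  set a : ℤ := -(n:ℤ)-2 with ha
  set b : ℤ := (n:ℤ)+1 with hb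
  have hab : a ≤ b := by omega
  -- step 1: rewrite energy as current * potential difference and Abel-sum it
  have e1 : eTot p n = ∑ j ∈ Finset.Icc a b, ∑ k ∈ Finset.Icc a b,
      (ihc p n k j * (v p n (k,j) - v p n (k+1,j))) +
      ∑ k ∈ Finset.Icc a b, ∑ j ∈ Finset.Icc a b,
      (ivc p n k j * (v p n (k,j) - v p n (k,j+1))) := by
    unfold eTot Q
    rw [Finset.sum_add_distrib]
    congr 1
    · rw [Finset.sum_product_right]
      refine Finset.sum_congr rfl fun j _ => Finset.sum_congr rfl fun k _ => ?_
      unfold ihc; ring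
    · rw [Finset.sum_product]
      refine Finset.sum_congr rfl fun k _ => Finset.sum_congr rfl fun j _ => ?_
      unfold ivc; ring
  have e2 : ∀ j ∈ Finset.Icc a b, ∑ k ∈ Finset.Icc a b,
      (ihc p n k j * (v p n (k,j) - v p n (k+1,j))) =
      ∑ k ∈ Finset.Icc a b, v p n (k,j) * (ihc p n k j - ihc p n (k-1) j) := by
    intro j _
    have := abel (fun k => ihc p n k j) (fun k => v p n (k,j)) a b hab
    beta_reduce at this
    rw [this, ih_zero' hp1 hp2 (by omega), ih_zero' hp1 hp2 (by omega)]
    ring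
  have e3 : ∀ k ∈ Finset.Icc a b, ∑ j ∈ Finset.Icc a b,
      (ivc p n k j * (v p n (k,j) - v p n (k,j+1))) =
      ∑ j ∈ Finset.Icc a b, v p n (k,j) * (ivc p n k j - ivc p n k (j-1)) := by
    intro k _
    have := abel (fun j => ivc p n k j) (fun j => v p n (k,j)) a b hab
    beta_reduce at this
    rw [this, iv_zero' hp1 hp2 (by omega), iv_zero' hp1 hp2 (by omega)]
    ring
  have e4 : eTot p n = ∑ x ∈ Q n, v p n x * dvg p n x := by
    rw [e1, Finset.sum_congr rfl e2, Finset.sum_congr rfl e3]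
    unfold Q
    rw [Finset.sum_product]
    rw [Finset.sum_comm]
    rw [← Finset.sum_add_distrib]
    refine Finset.sum_congr rfl fun k _ => ?_
    rw [← Finset.sum_add_distrib]
    refine Finset.sum_congr rfl fun j _ => ?_
    unfold dvg
    ring
  -- step 2: restrict to box (n+1)
  have hsub : box ((n:ℤ)+1) ⊆ Q n := by
    intro x hx
    rw [mem_box] at hx
    unfold Q
    rw [Finset.mem_product]
    constructor <;> (rw [Finset.mem_Icc]; omega)
  have e5 : eTot p n = ∑ x ∈ box ((n:ℤ)+1), v p n x * dvg p n x := by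
    rw [e4]
    refine (Finset.sum_subset hsub fun x hQ hbox => ?_).symm
    rw [dvg_far hp1 n ?_, mul_zero]
    intro hD
    obtain ⟨k, j⟩ := x
    unfold Dn at hD
    rw [mem_box] at hbox
    simp only [not_and_or, not_le] at hbox
    simp at hbox hD
    omega
  -- step 3: split off box n
  have hsub2 : box (n:ℤ) ⊆ box ((n:ℤ)+1) := by
    intro x hx; rw [mem_box] at *; omega
  have e6 : ∑ x ∈ box (n:ℤ), v p n x * dvg p n x = 0 := by
    refine Finset.sum_eq_zero fun x hx => ?_
    by_cases hxO : x = O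
    · rw [hxO, v_O hp1 hp2, zero_mul]
    · rw [dvg_zero hp1 hp2 n hxO ?_, mul_zero]
      rw [mem_box] at hx
      obtain ⟨k, j⟩ := x
      exact Dn_of (by simp at hx ⊢; omega) (by simp at hx ⊢; omega)
  have e7 : ∀ x ∈ box ((n:ℤ)+1) \ box (n:ℤ), v p n x * dvg p n x = dvg p n x := by
    intro x hx
    rw [Finset.mem_sdiff, mem_box, mem_box] at hx
    rw [v_out n ?_, one_mul]
    obtain ⟨k, j⟩ := x
    refine not_Dn ?_
    obtain ⟨h1, h2⟩ := hx
    simp only [not_and_or, not_le] at h2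
    simp only at h1
    omega
  have e8 : eTot p n = ∑ x ∈ box ((n:ℤ)+1) \ box (n:ℤ), dvg p n x := by
    rw [e5, ← Finset.sum_sdiff hsub2, e6, add_zero, Finset.sum_congr rfl e7]
  rw [e8, Finset.sum_sdiff_eq_sub hsub2, sum_div_outer hp1 hp2,
    sum_div_inner hp1 hp2 (by omega) (by omega)]
  ring

end Boxes

section Cuts

variable {n : ℕ}

/-- Cauchy–Schwarz in the weighted form -/
lemma cs {ι : Type*} (s : Finset ι) (c d : ι → ℝ) (hc : ∀ i ∈ s, 0 ≤ c i) :
    (∑ i ∈ s, c i * d i)^2 ≤ (∑ i ∈ s, c i) * (∑ i ∈ s, c i * d i^2) := by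
  have h := Finset.sum_mul_sq_le_sq_mul_sq s (fun i => Real.sqrt (c i))
    (fun i => Real.sqrt (c i) * d i)
  have e1 : ∑ i ∈ s, Real.sqrt (c i) * (Real.sqrt (c i) * d i) = ∑ i ∈ s, c i * d i := by
    refine Finset.sum_congr rfl fun i hi => ?_
    rw [← mul_assoc, Real.mul_self_sqrt (hc i hi)]
  have e2 : ∑ i ∈ s, Real.sqrt (c i) ^ 2 = ∑ i ∈ s, c i := by
    refine Finset.sum_congr rfl fun i hi => ?_
    rw [Real.sq_sqrt (hc i hi)]
  have e3 : ∑ i ∈ s, (Real.sqrt (c i) * d i) ^ 2 = ∑ i ∈ s, c i * d i ^ 2 := by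
    refine Finset.sum_congr rfl fun i hi => ?_
    rw [mul_pow, Real.sq_sqrt (hc i hi)]
  rw [e1, e2, e3] at h
  exact h

variable (p n)

/-- horizontal energy summand -/
def eh (x : V) : ℝ := ch p x.2 * (v p n x - v p n (x.1+1, x.2))^2
/-- vertical energy summand -/
def ev (x : V) : ℝ := (v p n x - v p n (x.1, x.2+1))^2

/-- the row-sum of reciprocals -/
def Crow (m : ℕ) : ℝ := ∑ j ∈ Finset.Icc (-(m:ℤ)) (m:ℤ), (p j)⁻¹

/-- energy of the cutset of the box of radius m -/
def cutE (m : ℕ) : ℝ :=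
  (∑ j ∈ Finset.Icc (-(m:ℤ)) (m:ℤ), eh p n ((m:ℤ), j)) +
  (∑ j ∈ Finset.Icc (-(m:ℤ)) (m:ℤ), eh p n (-(m:ℤ)-1, j)) +
  (∑ k ∈ Finset.Icc (-(m:ℤ)) (m:ℤ), ev p n (k, (m:ℤ))) +
  (∑ k ∈ Finset.Icc (-(m:ℤ)) (m:ℤ), ev p n (k, -(m:ℤ)-1))

variable {p n}

lemma eh_nonneg (hp1 : ∀ j, 0 < p j) (hp2 : ∀ j, p j ≤ 1/2) (x : V) : 0 ≤ eh p n x := by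
  have := ch_nonneg hp1 hp2 x.2
  unfold eh; positivity

lemma ev_nonneg (x : V) : 0 ≤ ev p n x := sq_nonneg _

lemma Crow_pos (hp1 : ∀ j, 0 < p j) (m : ℕ) : 0 < Crow p m := by
  refine Finset.sum_pos (fun j _ => inv_pos.mpr (hp1 j)) ?_
  exact ⟨0, by simp⟩

lemma ch_le_inv (hp1 : ∀ j, 0 < p j) (hp2 : ∀ j, p j ≤ 1/2) (j : ℤ) :
    ch p j ≤ (p j)⁻¹ := by
  unfold ch
  rw [div_le_iff₀ (hp1 j), inv_mul_cancel₀ (ne_of_gt (hp1 j))]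
  linarith [hp1 j]

lemma one_le_inv_p (hp1 : ∀ j, 0 < p j) (hp2 : ∀ j, p j ≤ 1/2) (j : ℤ) :
    1 ≤ (p j)⁻¹ := by
  rw [le_inv_comm₀ one_pos (hp1 j)]
  linarith [hp2 j]

/-- flux through the cutset of the box of radius `m ≤ n` equals `theta` -/
lemma theta_eq_flux (hp1 : ∀ j, 0 < p j) (hp2 : ∀ j, p j ≤ 1/2) {m : ℕ} (hm : m ≤ n) :
    theta p n =
      (∑ j ∈ Finset.Icc (-(m:ℤ)) (m:ℤ), (ihc p n (-(m:ℤ)-1) j - ihc p n (m:ℤ) j)) +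
      (∑ k ∈ Finset.Icc (-(m:ℤ)) (m:ℤ), (ivc p n k (-(m:ℤ)-1) - ivc p n k (m:ℤ))) := by
  have h1 := sum_div_box (n := n) hp1 (m:ℤ) (by omega)
  have h2 := sum_div_inner (n := n) hp1 hp2 (m := (m:ℤ)) (by omega) (by omega)
  rw [h2] at h1
  have := congrArg (fun t : ℝ => -t) h1
  simp only [neg_neg] at this
  rw [this, neg_add]
  congr 1
  · rw [← Finset.sum_neg_distrib]
    exact Finset.sum_congr rfl fun t _ => by ring
  · rw [← Finset.sum_neg_distrib]
    exact Finset.sum_congr rfl fun t _ => by ring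

/-- the cut Cauchy–Schwarz estimate -/
lemma cut_cs (hp1 : ∀ j, 0 < p j) (hp2 : ∀ j, p j ≤ 1/2) {m : ℕ} (hm : m ≤ n) :
    theta p n ^ 2 ≤ 4 * Crow p m * cutE p n m := by
  set I := Finset.Icc (-(m:ℤ)) (m:ℤ) with hI
  set S1 : ℝ := ∑ j ∈ I, (- ihc p n (m:ℤ) j) with hS1
  set S2 : ℝ := ∑ j ∈ I, ihc p n (-(m:ℤ)-1) j with hS2
  set S3 : ℝ := ∑ k ∈ I, (- ivc p n k (m:ℤ)) with hS3
  set S4 : ℝ := ∑ k ∈ I, ivc p n k (-(m:ℤ)-1) with hS4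
  have hsum : theta p n = S1 + S2 + S3 + S4 := by
    have hA : ∑ j ∈ I, (ihc p n (-(m:ℤ)-1) j - ihc p n (m:ℤ) j) = S1 + S2 := by
      rw [hS1, hS2, ← Finset.sum_add_distrib]
      exact Finset.sum_congr rfl fun t _ => by ring
    have hB : ∑ k ∈ I, (ivc p n k (-(m:ℤ)-1) - ivc p n k (m:ℤ)) = S3 + S4 := by
      rw [hS3, hS4, ← Finset.sum_add_distrib]
      exact Finset.sum_congr rfl fun t _ => by ring
    rw [theta_eq_flux hp1 hp2 hm, hA, hB]
    ring
  -- CS for each group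
  have hCrow1 : ∑ j ∈ I, ch p j ≤ Crow p m :=
    Finset.sum_le_sum fun j _ => ch_le_inv hp1 hp2 j
  have hCrow0 : 0 ≤ ∑ j ∈ I, ch p j :=
    Finset.sum_nonneg fun j _ => ch_nonneg hp1 hp2 j
  have hCrow2 : ∑ j ∈ I, (1:ℝ) ≤ Crow p m :=
    Finset.sum_le_sum fun j _ => one_le_inv_p hp1 hp2 j
  have hCrow2' : (0:ℝ) ≤ ∑ j ∈ I, (1:ℝ) := by positivity
  have E1 : ∀ j ∈ I, (0:ℝ) ≤ eh p n ((m:ℤ), j) := fun j _ => eh_nonneg hp1 hp2 _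
  have c1 : S1^2 ≤ Crow p m * ∑ j ∈ I, eh p n ((m:ℤ), j) := by
    have h := cs I (fun j => ch p j) (fun j => v p n ((m:ℤ)+1, j) - v p n ((m:ℤ), j))
      (fun j _ => ch_nonneg hp1 hp2 j)
    have e : S1 = ∑ j ∈ I, ch p j * (v p n ((m:ℤ)+1, j) - v p n ((m:ℤ), j)) := by
      rw [hS1]; refine Finset.sum_congr rfl fun j _ => by unfold ihc; ring
    have e2 : ∑ j ∈ I, ch p j * (v p n ((m:ℤ)+1, j) - v p n ((m:ℤ), j))^2
        = ∑ j ∈ I, eh p n ((m:ℤ), j) := by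
      refine Finset.sum_congr rfl fun j _ => by unfold eh; ring_nf
    rw [e]
    refine le_trans h ?_
    rw [e2]
    refine mul_le_mul_of_nonneg_right hCrow1 ?_
    exact Finset.sum_nonneg E1
  have c2 : S2^2 ≤ Crow p m * ∑ j ∈ I, eh p n (-(m:ℤ)-1, j) := by
    have h := cs I (fun j => ch p j) (fun j => v p n (-(m:ℤ)-1, j) - v p n (-(m:ℤ), j))
      (fun j _ => ch_nonneg hp1 hp2 j)
    have e : S2 = ∑ j ∈ I, ch p j * (v p n (-(m:ℤ)-1, j) - v p n (-(m:ℤ), j)) := by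
      rw [hS2]
      refine Finset.sum_congr rfl fun j _ => by
        unfold ihc
        have : (-(m:ℤ)-1) + 1 = -(m:ℤ) := by ring
        rw [this]
    have e2 : ∑ j ∈ I, ch p j * (v p n (-(m:ℤ)-1, j) - v p n (-(m:ℤ), j))^2
        = ∑ j ∈ I, eh p n (-(m:ℤ)-1, j) := by
      refine Finset.sum_congr rfl fun j _ => by
        unfold eh
        have : (-(m:ℤ)-1) + 1 = -(m:ℤ) := by ring
        rw [this]
    rw [e]
    refine le_trans h ?_
    rw [e2]
    refine mul_le_mul_of_nonneg_right hCrow1 ?_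
    exact Finset.sum_nonneg fun j _ => eh_nonneg hp1 hp2 _
  have c3 : S3^2 ≤ Crow p m * ∑ k ∈ I, ev p n (k, (m:ℤ)) := by
    have h := cs I (fun _ => (1:ℝ)) (fun k => v p n (k, (m:ℤ)+1) - v p n (k, (m:ℤ)))
      (fun _ _ => zero_le_one)
    have e : S3 = ∑ k ∈ I, (1:ℝ) * (v p n (k, (m:ℤ)+1) - v p n (k, (m:ℤ))) := by
      rw [hS3]; refine Finset.sum_congr rfl fun k _ => by unfold ivc; ring
    have e2 : ∑ k ∈ I, (1:ℝ) * (v p n (k, (m:ℤ)+1) - v p n (k, (m:ℤ)))^2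
        = ∑ k ∈ I, ev p n (k, (m:ℤ)) := by
      refine Finset.sum_congr rfl fun k _ => by unfold ev; ring_nf
    rw [e]
    refine le_trans h ?_
    rw [e2]
    refine mul_le_mul_of_nonneg_right hCrow2 ?_
    exact Finset.sum_nonneg fun k _ => ev_nonneg _
  have c4 : S4^2 ≤ Crow p m * ∑ k ∈ I, ev p n (k, -(m:ℤ)-1) := by
    have h := cs I (fun _ => (1:ℝ)) (fun k => v p n (k, -(m:ℤ)-1) - v p n (k, -(m:ℤ)))
      (fun _ _ => zero_le_one)
    have e : S4 = ∑ k ∈ I, (1:ℝ) * (v p n (k, -(m:ℤ)-1) - v p n (k, -(m:ℤ))) := by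
      rw [hS4]
      refine Finset.sum_congr rfl fun k _ => by
        unfold ivc
        have : (-(m:ℤ)-1) + 1 = -(m:ℤ) := by ring
        rw [this, one_mul]
    have e2 : ∑ k ∈ I, (1:ℝ) * (v p n (k, -(m:ℤ)-1) - v p n (k, -(m:ℤ)))^2
        = ∑ k ∈ I, ev p n (k, -(m:ℤ)-1) := by
      refine Finset.sum_congr rfl fun k _ => by
        unfold ev
        have : (-(m:ℤ)-1) + 1 = -(m:ℤ) := by ring
        rw [this, one_mul]
    rw [e]
    refine le_trans h ?_
    rw [e2]
    refine mul_le_mul_of_nonneg_right hCrow2 ?_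
    exact Finset.sum_nonneg fun k _ => ev_nonneg _
  -- combine
  have hq : theta p n ^2 ≤ 4 * (S1^2 + S2^2 + S3^2 + S4^2) := by
    rw [hsum]
    nlinarith [sq_nonneg (S1 - S2), sq_nonneg (S1 - S3), sq_nonneg (S1 - S4),
      sq_nonneg (S2 - S3), sq_nonneg (S2 - S4), sq_nonneg (S3 - S4)]
  refine le_trans hq ?_
  unfold cutE
  nlinarith [c1, c2, c3, c4]

end Cuts

section CutSum

variable {n : ℕ}

lemma eTot_split : eTot p n = (∑ x ∈ Q n, eh p n x) + (∑ x ∈ Q n, ev p n x) := by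
  unfold eTot eh ev
  rw [← Finset.sum_add_distrib]

lemma sum_cutE_le (hp1 : ∀ j, 0 < p j) (hp2 : ∀ j, p j ≤ 1/2) :
    ∑ m ∈ Finset.range (n+1), cutE p n m ≤ eTot p n := by
  classical
  set S : Finset ((_ : ℕ) × ℤ) :=
    (Finset.range (n+1)).sigma (fun m => Finset.Icc (-(m:ℤ)) (m:ℤ)) with hS
  have memS : ∀ {σ : (_ : ℕ) × ℤ}, σ ∈ S ↔ σ.1 < n+1 ∧ -(σ.1:ℤ) ≤ σ.2 ∧ σ.2 ≤ (σ.1:ℤ) := by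
    intro σ
    simp [hS, Finset.mem_sigma, Finset.mem_range, Finset.mem_Icc]
  set e1 : ((_ : ℕ) × ℤ) → V := fun σ => ((σ.1:ℤ), σ.2) with he1
  set e2 : ((_ : ℕ) × ℤ) → V := fun σ => (-(σ.1:ℤ)-1, σ.2) with he2
  set e3 : ((_ : ℕ) × ℤ) → V := fun σ => (σ.2, (σ.1:ℤ)) with he3
  set e4 : ((_ : ℕ) × ℤ) → V := fun σ => (σ.2, -(σ.1:ℤ)-1) with he4
  have inj : ∀ (a c : ℤ) (b d : ℤ), ((a,b) : V) = (c,d) → a = c ∧ b = d := by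
    intro a c b d h
    exact ⟨congrArg Prod.fst h, congrArg Prod.snd h⟩
  have hinj1 : ∀ x ∈ S, ∀ y ∈ S, e1 x = e1 y → x = y := by
    rintro ⟨m, j⟩ _ ⟨m', j'⟩ _ h
    obtain ⟨h1, h2⟩ := inj _ _ _ _ h
    dsimp only at h1 h2
    have : m = m' := by exact_mod_cast h1
    subst this; subst h2; rfl
  have hinj2 : ∀ x ∈ S, ∀ y ∈ S, e2 x = e2 y → x = y := by
    rintro ⟨m, j⟩ _ ⟨m', j'⟩ _ h
    obtain ⟨h1, h2⟩ := inj _ _ _ _ h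
    dsimp only at h1 h2
    have : m = m' := by omega
    subst this; subst h2; rfl
  have hinj3 : ∀ x ∈ S, ∀ y ∈ S, e3 x = e3 y → x = y := by
    rintro ⟨m, j⟩ _ ⟨m', j'⟩ _ h
    obtain ⟨h1, h2⟩ := inj _ _ _ _ h
    dsimp only at h1 h2
    have : m = m' := by exact_mod_cast h2
    subst this; subst h1; rfl
  have hinj4 : ∀ x ∈ S, ∀ y ∈ S, e4 x = e4 y → x = y := by
    rintro ⟨m, j⟩ _ ⟨m', j'⟩ _ h
    obtain ⟨h1, h2⟩ := inj _ _ _ _ h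
    dsimp only at h1 h2
    have : m = m' := by omega
    subst this; subst h1; rfl
  have memQ : ∀ {x : V}, x ∈ Q n ↔
      (-(n:ℤ)-2 ≤ x.1 ∧ x.1 ≤ (n:ℤ)+1) ∧ (-(n:ℤ)-2 ≤ x.2 ∧ x.2 ≤ (n:ℤ)+1) := by
    intro x
    simp [Q, Finset.mem_product, Finset.mem_Icc]
  have hsub1 : S.image e1 ⊆ Q n := by
    intro x hx
    obtain ⟨⟨m, j⟩, hmem, rfl⟩ := Finset.mem_image.mp hx
    rw [memS] at hmem
    rw [memQ]
    dsimp only [he1, e1] at hmem ⊢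
    refine ⟨⟨?_, ?_⟩, ?_, ?_⟩ <;> omega
  have hsub2 : S.image e2 ⊆ Q n := by
    intro x hx
    obtain ⟨⟨m, j⟩, hmem, rfl⟩ := Finset.mem_image.mp hx
    rw [memS] at hmem
    rw [memQ]
    dsimp only [he2, e2] at hmem ⊢
    refine ⟨⟨?_, ?_⟩, ?_, ?_⟩ <;> omega
  have hsub3 : S.image e3 ⊆ Q n := by
    intro x hx
    obtain ⟨⟨m, j⟩, hmem, rfl⟩ := Finset.mem_image.mp hx
    rw [memS] at hmem
    rw [memQ]
    dsimp only [he3, e3] at hmem ⊢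
    refine ⟨⟨?_, ?_⟩, ?_, ?_⟩ <;> omega
  have hsub4 : S.image e4 ⊆ Q n := by
    intro x hx
    obtain ⟨⟨m, j⟩, hmem, rfl⟩ := Finset.mem_image.mp hx
    rw [memS] at hmem
    rw [memQ]
    dsimp only [he4, e4] at hmem ⊢
    refine ⟨⟨?_, ?_⟩, ?_, ?_⟩ <;> omega
  have hdisj12 : Disjoint (S.image e1) (S.image e2) := by
    rw [Finset.disjoint_left]
    intro x hx1 hx2
    obtain ⟨⟨m, j⟩, _, rfl⟩ := Finset.mem_image.mp hx1
    obtain ⟨⟨m', j'⟩, _, h⟩ := Finset.mem_image.mp hx2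
    have := (inj _ _ _ _ h).1
    dsimp only at this
    omega
  have hdisj34 : Disjoint (S.image e3) (S.image e4) := by
    rw [Finset.disjoint_left]
    intro x hx1 hx2
    obtain ⟨⟨m, j⟩, _, rfl⟩ := Finset.mem_image.mp hx1
    obtain ⟨⟨m', j'⟩, _, h⟩ := Finset.mem_image.mp hx2
    have := (inj _ _ _ _ h).2
    dsimp only at this
    omega
  -- rewrite the cut energies as image sums
  have g1 : ∑ m ∈ Finset.range (n+1), (∑ j ∈ Finset.Icc (-(m:ℤ)) (m:ℤ), eh p n ((m:ℤ), j))
      = ∑ x ∈ S.image e1, eh p n x := by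
    rw [Finset.sum_image hinj1, hS, Finset.sum_sigma]
  have g2 : ∑ m ∈ Finset.range (n+1), (∑ j ∈ Finset.Icc (-(m:ℤ)) (m:ℤ), eh p n (-(m:ℤ)-1, j))
      = ∑ x ∈ S.image e2, eh p n x := by
    rw [Finset.sum_image hinj2, hS, Finset.sum_sigma]
  have g3 : ∑ m ∈ Finset.range (n+1), (∑ k ∈ Finset.Icc (-(m:ℤ)) (m:ℤ), ev p n (k, (m:ℤ)))
      = ∑ x ∈ S.image e3, ev p n x := by
    rw [Finset.sum_image hinj3, hS, Finset.sum_sigma]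
  have g4 : ∑ m ∈ Finset.range (n+1), (∑ k ∈ Finset.Icc (-(m:ℤ)) (m:ℤ), ev p n (k, -(m:ℤ)-1))
      = ∑ x ∈ S.image e4, ev p n x := by
    rw [Finset.sum_image hinj4, hS, Finset.sum_sigma]
  have hcut : ∑ m ∈ Finset.range (n+1), cutE p n m =
      (∑ x ∈ S.image e1, eh p n x) + (∑ x ∈ S.image e2, eh p n x) +
      (∑ x ∈ S.image e3, ev p n x) + (∑ x ∈ S.image e4, ev p n x) := by
    unfold cutE
    rw [← g1, ← g2, ← g3, ← g4]
    rw [Finset.sum_add_distrib, Finset.sum_add_distrib, Finset.sum_add_distrib]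
  have hh : (∑ x ∈ S.image e1, eh p n x) + (∑ x ∈ S.image e2, eh p n x)
      ≤ ∑ x ∈ Q n, eh p n x := by
    rw [← Finset.sum_union hdisj12]
    refine Finset.sum_le_sum_of_subset_of_nonneg (Finset.union_subset hsub1 hsub2)
      (fun x _ _ => eh_nonneg hp1 hp2 x)
  have hv : (∑ x ∈ S.image e3, ev p n x) + (∑ x ∈ S.image e4, ev p n x)
      ≤ ∑ x ∈ Q n, ev p n x := by
    rw [← Finset.sum_union hdisj34]
    refine Finset.sum_le_sum_of_subset_of_nonneg (Finset.union_subset hsub3 hsub4)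
      (fun x _ _ => ev_nonneg x)
  rw [hcut, eTot_split]
  linarith

variable (p)

/-- partial sums of the Nash–Williams series -/
def Apart (n : ℕ) : ℝ := ∑ m ∈ Finset.range (n+1), (Crow p m)⁻¹

variable {p}

lemma Apart_pos (hp1 : ∀ j, 0 < p j) (n : ℕ) : 0 < Apart p n := by
  refine Finset.sum_pos (fun m _ => inv_pos.mpr (Crow_pos hp1 m)) ⟨0, by simp⟩

/-- Nash–Williams estimate: `theta * A_n ≤ 4`. -/
lemma theta_mul_le (hp1 : ∀ j, 0 < p j) (hp2 : ∀ j, p j ≤ 1/2) (n : ℕ) :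
    theta p n * Apart p n ≤ 4 := by
  have h1 : ∀ m ∈ Finset.range (n+1), (Crow p m)⁻¹ * theta p n ^ 2 ≤ 4 * cutE p n m := by
    intro m hm
    have hcs := cut_cs hp1 hp2 (n := n) (m := m) (by
      simpa using Nat.lt_succ_iff.mp (Finset.mem_range.mp hm))
    have hC := Crow_pos hp1 (p := p) m
    rw [inv_mul_le_iff₀ hC]
    nlinarith
  have h2 : ∑ m ∈ Finset.range (n+1), (Crow p m)⁻¹ * theta p n ^ 2
      ≤ ∑ m ∈ Finset.range (n+1), 4 * cutE p n m := Finset.sum_le_sum h1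
  rw [← Finset.sum_mul, ← Finset.mul_sum] at h2
  have h3 : Apart p n * theta p n ^2 ≤ 4 * theta p n := by
    calc Apart p n * theta p n ^2 ≤ 4 * ∑ m ∈ Finset.range (n+1), cutE p n m := h2
    _ ≤ 4 * eTot p n := by linarith [sum_cutE_le (n := n) hp1 hp2]
    _ = 4 * theta p n := by rw [green hp1 hp2]
  have hθ := theta_nonneg hp1 hp2 n
  have hA := Apart_pos hp1 (p := p) n
  rcases eq_or_lt_of_le hθ with h | h
  · rw [← h]; norm_num
  · nlinarith

end CutSum

section Reach

/-- `x` dominates `y`: `v n x ≥ ρ v n y` for large `n`. -/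
def Reach (p : ℤ → ℝ) (x y : V) : Prop :=
  ∃ (N : ℕ) (ρ : ℝ), 0 < ρ ∧ ∀ n, N ≤ n → ρ * v p n y ≤ v p n x

lemma reach_refl (x : V) : Reach p x x :=
  ⟨0, 1, one_pos, fun n _ => by rw [one_mul]⟩

lemma reach_trans (hp1 : ∀ j, 0 < p j) (hp2 : ∀ j, p j ≤ 1/2) {x y z : V}
    (h1 : Reach p x y) (h2 : Reach p y z) : Reach p x z := by
  obtain ⟨N1, ρ1, hρ1, hr1⟩ := h1
  obtain ⟨N2, ρ2, hρ2, hr2⟩ := h2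
  refine ⟨max N1 N2, ρ1 * ρ2, mul_pos hρ1 hρ2, fun n hn => ?_⟩
  have a1 := hr1 n (le_trans (le_max_left _ _) hn)
  have a2 := hr2 n (le_trans (le_max_right _ _) hn)
  calc ρ1 * ρ2 * v p n z = ρ1 * (ρ2 * v p n z) := by ring
  _ ≤ ρ1 * v p n y := by exact mul_le_mul_of_nonneg_left a2 hρ1.le
  _ ≤ v p n x := a1

/-- size of a site -/
def nb (x : V) : ℕ := max x.1.natAbs x.2.natAbs

lemma Dn_of_nb {n : ℕ} {x : V} (h : nb x ≤ n) : Dn n x := by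
  obtain ⟨k, j⟩ := x
  unfold nb at h
  exact Dn_of (by simp at h ⊢; omega) (by simp at h ⊢; omega)

lemma v_ge (hp1 : ∀ j, 0 < p j) (hp2 : ∀ j, p j ≤ 1/2) {x : V} (hx : x ≠ O)
    {n : ℕ} (hn : nb x ≤ n) :
    (1/2 - p x.2) * v p n (x.1+1, x.2) ≤ v p n x ∧
    (1/2 - p x.2) * v p n (x.1-1, x.2) ≤ v p n x ∧
    p x.2 * v p n (x.1, x.2+1) ≤ v p n x ∧
    p x.2 * v p n (x.1, x.2-1) ≤ v p n x := by
  have hharm := v_harm hp1 hp2 n hx (Dn_of_nb hn)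
  unfold L at hharm
  have h1 : (0:ℝ) ≤ 1/2 - p x.2 := by linarith [hp2 x.2]
  have h2 : (0:ℝ) ≤ p x.2 := (hp1 x.2).le
  have n1 := v_nonneg hp1 hp2 n (x.1+1, x.2)
  have n2 := v_nonneg hp1 hp2 n (x.1-1, x.2)
  have n3 := v_nonneg hp1 hp2 n (x.1, x.2+1)
  have n4 := v_nonneg hp1 hp2 n (x.1, x.2-1)
  refine ⟨?_, ?_, ?_, ?_⟩ <;> nlinarith

lemma reach_up (hp1 : ∀ j, 0 < p j) (hp2 : ∀ j, p j ≤ 1/2) {x : V} (hx : x ≠ O) :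
    Reach p x (x.1, x.2+1) :=
  ⟨nb x, p x.2, hp1 x.2, fun n hn => (v_ge hp1 hp2 hx hn).2.2.1⟩

lemma reach_down (hp1 : ∀ j, 0 < p j) (hp2 : ∀ j, p j ≤ 1/2) {x : V} (hx : x ≠ O) :
    Reach p x (x.1, x.2-1) :=
  ⟨nb x, p x.2, hp1 x.2, fun n hn => (v_ge hp1 hp2 hx hn).2.2.2⟩

lemma reach_right (hp1 : ∀ j, 0 < p j) (hp2 : ∀ j, p j ≤ 1/2) {x : V} (hx : x ≠ O)
    (hrow : p x.2 < 1/2) : Reach p x (x.1+1, x.2) :=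
  ⟨nb x, 1/2 - p x.2, by linarith, fun n hn => (v_ge hp1 hp2 hx hn).1⟩

lemma reach_left (hp1 : ∀ j, 0 < p j) (hp2 : ∀ j, p j ≤ 1/2) {x : V} (hx : x ≠ O)
    (hrow : p x.2 < 1/2) : Reach p x (x.1-1, x.2) :=
  ⟨nb x, 1/2 - p x.2, by linarith, fun n hn => (v_ge hp1 hp2 hx hn).2.1⟩

lemma reach_seg_up (hp1 : ∀ j, 0 < p j) (hp2 : ∀ j, p j ≤ 1/2) (k a : ℤ) :
    ∀ (m : ℕ), (∀ i : ℕ, (i:ℤ) < m → (k, a + i) ≠ O) → Reach p (k, a) (k, a + m) := by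
  intro m
  induction m with
  | zero => intro _; simpa using reach_refl (k, a)
  | succ m ih =>
    intro h
    have h1 : Reach p (k, a) (k, a + m) := ih fun i hi => h i (by omega)
    have h2 : Reach p (k, a + m) (k, a + m + 1) := by
      have := reach_up hp1 hp2 (x := (k, a + (m:ℤ))) (h m (by omega))
      simpa using this
    have := reach_trans hp1 hp2 h1 h2
    have he : a + (m:ℤ) + 1 = a + ((m:ℕ)+1 : ℕ) := by push_cast; ring
    rwa [he] at this

lemma reach_seg_down (hp1 : ∀ j, 0 < p j) (hp2 : ∀ j, p j ≤ 1/2) (k a : ℤ) :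
    ∀ (m : ℕ), (∀ i : ℕ, (i:ℤ) < m → (k, a - i) ≠ O) → Reach p (k, a) (k, a - m) := by
  intro m
  induction m with
  | zero => intro _; simpa using reach_refl (k, a)
  | succ m ih =>
    intro h
    have h1 : Reach p (k, a) (k, a - m) := ih fun i hi => h i (by omega)
    have h2 : Reach p (k, a - m) (k, a - m - 1) := by
      have := reach_down hp1 hp2 (x := (k, a - (m:ℤ))) (h m (by omega))
      simpa using this
    have := reach_trans hp1 hp2 h1 h2
    have he : a - (m:ℤ) - 1 = a - ((m:ℕ)+1 : ℕ) := by push_cast; ring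
    rwa [he] at this

lemma reach_seg_right (hp1 : ∀ j, 0 < p j) (hp2 : ∀ j, p j ≤ 1/2) (a j : ℤ)
    (hrow : p j < 1/2) :
    ∀ (m : ℕ), (∀ i : ℕ, (i:ℤ) < m → (a + i, j) ≠ O) → Reach p (a, j) (a + m, j) := by
  intro m
  induction m with
  | zero => intro _; simpa using reach_refl (a, j)
  | succ m ih =>
    intro h
    have h1 : Reach p (a, j) (a + m, j) := ih fun i hi => h i (by omega)
    have h2 : Reach p (a + m, j) (a + m + 1, j) := by
      have := reach_right hp1 hp2 (x := (a + (m:ℤ), j)) (h m (by omega)) hrow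
      simpa using this
    have := reach_trans hp1 hp2 h1 h2
    have he : a + (m:ℤ) + 1 = a + ((m:ℕ)+1 : ℕ) := by push_cast; ring
    rwa [he] at this

lemma reach_seg_left (hp1 : ∀ j, 0 < p j) (hp2 : ∀ j, p j ≤ 1/2) (a j : ℤ)
    (hrow : p j < 1/2) :
    ∀ (m : ℕ), (∀ i : ℕ, (i:ℤ) < m → (a - i, j) ≠ O) → Reach p (a, j) (a - m, j) := by
  intro m
  induction m with
  | zero => intro _; simpa using reach_refl (a, j)
  | succ m ih =>
    intro h
    have h1 : Reach p (a, j) (a - m, j) := ih fun i hi => h i (by omega)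
    have h2 : Reach p (a - m, j) (a - m - 1, j) := by
      have := reach_left hp1 hp2 (x := (a - (m:ℤ), j)) (h m (by omega)) hrow
      simpa using this
    have := reach_trans hp1 hp2 h1 h2
    have he : a - (m:ℤ) - 1 = a - ((m:ℕ)+1 : ℕ) := by push_cast; ring
    rwa [he] at this

lemma ne_O_iff {k j : ℤ} : ((k, j) : V) ≠ O ↔ ¬(k = 0 ∧ j = 0) := by
  unfold O
  constructor
  · intro h hc
    exact h (by rw [hc.1, hc.2])
  · intro h hc
    exact h ⟨congrArg Prod.fst hc, congrArg Prod.snd hc⟩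

/-- move vertically from `(k,a)` to `(k,b)`, not passing through the origin -/
lemma reach_vert (hp1 : ∀ j, 0 < p j) (hp2 : ∀ j, p j ≤ 1/2) {k a b : ℤ}
    (h : ∀ t : ℤ, min a b ≤ t → t ≤ max a b → (k, t) ≠ O) :
    Reach p (k, a) (k, b) := by
  rcases le_or_gt a b with hab | hab
  · have hb : b = a + ((b - a).toNat : ℤ) := by omega
    rw [hb]
    refine reach_seg_up hp1 hp2 k a _ fun i hi => h (a + i) (by omega) (by omega)
  · have hb : b = a - ((a - b).toNat : ℤ) := by omega
    rw [hb]
    refine reach_seg_down hp1 hp2 k a _ fun i hi => h (a - i) (by omega) (by omega)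

/-- move horizontally from `(a,j)` to `(b,j)` along a row with `p j < 1/2` -/
lemma reach_horiz (hp1 : ∀ j, 0 < p j) (hp2 : ∀ j, p j ≤ 1/2) {a b j : ℤ}
    (hrow : p j < 1/2)
    (h : ∀ t : ℤ, min a b ≤ t → t ≤ max a b → (t, j) ≠ O) :
    Reach p (a, j) (b, j) := by
  rcases le_or_gt a b with hab | hab
  · have hb : b = a + ((b - a).toNat : ℤ) := by omega
    rw [hb]
    refine reach_seg_right hp1 hp2 a j hrow _ fun i hi => h (a + i) (by omega) (by omega)
  · have hb : b = a - ((a - b).toNat : ℤ) := by omega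
    rw [hb]
    refine reach_seg_left hp1 hp2 a j hrow _ fun i hi => h (a - i) (by omega) (by omega)

/-- conductance from the origin to its neighbours -/
def cOf (p : ℤ → ℝ) (y : V) : ℝ := if y.1 = 0 then 1 else ch p 0

lemma theta_expand (hp1 : ∀ j, 0 < p j) (n : ℕ) : theta p n =
    ch p 0 * (v p n (1,0) + v p n (-1,0)) + (v p n (0,1) + v p n (0,-1)) := by
  have hp0 : p 0 ≠ 0 := ne_of_gt (hp1 0)
  unfold theta L ch O
  field_simp
  ring

lemma theta_ge (hp1 : ∀ j, 0 < p j) (hp2 : ∀ j, p j ≤ 1/2) (n : ℕ) {y : V}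
    (hy : y = (1,0) ∨ y = (-1,0) ∨ y = (0,1) ∨ y = (0,-1)) :
    cOf p y * v p n y ≤ theta p n := by
  have hch := ch_nonneg hp1 hp2 0
  have n1 := v_nonneg hp1 hp2 n (1,0)
  have n2 := v_nonneg hp1 hp2 n (-1,0)
  have n3 := v_nonneg hp1 hp2 n (0,1)
  have n4 := v_nonneg hp1 hp2 n (0,-1)
  rw [theta_expand hp1]
  rcases hy with rfl | rfl | rfl | rfl <;>
    simp only [cOf] <;> norm_num <;> nlinarith

/-- from some conducting neighbour of the origin one can reach any `x ≠ O`. -/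
lemma reach_from_nbr (hp1 : ∀ j, 0 < p j) (hp2 : ∀ j, p j ≤ 1/2)
    (hpmin : ∃ j1, p j1 < 1/2) {x : V} (hx : x ≠ O) :
    ∃ y : V, (y = (1,0) ∨ y = (-1,0) ∨ y = (0,1) ∨ y = (0,-1)) ∧
      0 < cOf p y ∧ Reach p y x := by
  obtain ⟨k, j⟩ := x
  have hkj : ¬(k = 0 ∧ j = 0) := ne_O_iff.mp hx
  obtain ⟨j1, hj1⟩ := hpmin
  by_cases hk : k = 0
  · -- on the vertical axis
    subst hk
    have hj : j ≠ 0 := by tauto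
    rcases lt_or_gt_of_ne hj with hneg | hpos
    · refine ⟨(0,-1), by tauto, by simp [cOf], ?_⟩
      refine reach_vert hp1 hp2 fun t h1 h2 => ne_O_iff.mpr (by omega)
    · refine ⟨(0,1), by tauto, by simp [cOf], ?_⟩
      refine reach_vert hp1 hp2 fun t h1 h2 => ne_O_iff.mpr (by omega)
  · by_cases h0 : p 0 < 1/2
    · -- use row 0
      have hch : 0 < ch p 0 := div_pos (by linarith) (hp1 0)
      rcases lt_or_gt_of_ne hk with hneg | hpos
      · refine ⟨(-1,0), by tauto, by simp [cOf, hch], ?_⟩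
        have r1 : Reach p ((-1:ℤ),(0:ℤ)) (k, 0) :=
          reach_horiz hp1 hp2 h0 fun t h1 h2 => ne_O_iff.mpr (by omega)
        have r2 : Reach p ((k:ℤ),(0:ℤ)) (k, j) :=
          reach_vert hp1 hp2 fun t h1 h2 => ne_O_iff.mpr (by omega)
        exact reach_trans hp1 hp2 r1 r2
      · refine ⟨(1,0), by tauto, by simp [cOf, hch], ?_⟩
        have r1 : Reach p ((1:ℤ),(0:ℤ)) (k, 0) :=
          reach_horiz hp1 hp2 h0 fun t h1 h2 => ne_O_iff.mpr (by omega)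
        have r2 : Reach p ((k:ℤ),(0:ℤ)) (k, j) :=
          reach_vert hp1 hp2 fun t h1 h2 => ne_O_iff.mpr (by omega)
        exact reach_trans hp1 hp2 r1 r2
    · -- p 0 = 1/2, so j1 ≠ 0; go through row j1
      have hj1ne : j1 ≠ 0 := fun hc => h0 (hc ▸ hj1)
      rcases lt_or_gt_of_ne hj1ne with hneg | hpos
      · refine ⟨(0,-1), by tauto, by simp [cOf], ?_⟩
        have r1 : Reach p ((0:ℤ),(-1:ℤ)) (0, j1) :=
          reach_vert hp1 hp2 fun t h1 h2 => ne_O_iff.mpr (by omega)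
        have r2 : Reach p ((0:ℤ), j1) (k, j1) :=
          reach_horiz hp1 hp2 hj1 fun t h1 h2 => ne_O_iff.mpr (by omega)
        have r3 : Reach p (k, j1) (k, j) :=
          reach_vert hp1 hp2 fun t h1 h2 => ne_O_iff.mpr (by omega)
        exact reach_trans hp1 hp2 (reach_trans hp1 hp2 r1 r2) r3
      · refine ⟨(0,1), by tauto, by simp [cOf], ?_⟩
        have r1 : Reach p ((0:ℤ),(1:ℤ)) (0, j1) :=
          reach_vert hp1 hp2 fun t h1 h2 => ne_O_iff.mpr (by omega)
        have r2 : Reach p ((0:ℤ), j1) (k, j1) :=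
          reach_horiz hp1 hp2 hj1 fun t h1 h2 => ne_O_iff.mpr (by omega)
        have r3 : Reach p (k, j1) (k, j) :=
          reach_vert hp1 hp2 fun t h1 h2 => ne_O_iff.mpr (by omega)
        exact reach_trans hp1 hp2 (reach_trans hp1 hp2 r1 r2) r3

end Reach

section Limits

/-- `v n x → 0` as `n → ∞`, under the divergence hypothesis. -/
lemma v_to_zero (hp1 : ∀ j, 0 < p j) (hp2 : ∀ j, p j ≤ 1/2)
    (hpmin : ∃ j1, p j1 < 1/2)
    (hA : Tendsto (fun n => Apart p n) atTop atTop)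
    {x : V} (hx : x ≠ O) :
    Tendsto (fun n => v p n x) atTop (nhds 0) := by
  obtain ⟨y, hy, hcy, N, ρ, hρ, hr⟩ := reach_from_nbr hp1 hp2 hpmin hx
  have hub : ∀ n, N ≤ n → v p n x ≤ (ρ * cOf p y)⁻¹ * (4 * (Apart p n)⁻¹) := by
    intro n hn
    have h1 : ρ * v p n x ≤ v p n y := hr n hn
    have h2 : cOf p y * v p n y ≤ theta p n := theta_ge hp1 hp2 n hy
    have h3 : theta p n * Apart p n ≤ 4 := theta_mul_le hp1 hp2 n
    have hAp := Apart_pos hp1 (p := p) n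
    have hθ : theta p n ≤ 4 * (Apart p n)⁻¹ := by
      rw [← le_div_iff₀ hAp] at h3
      rw [div_eq_mul_inv] at h3
      exact h3
    have hvy : v p n y ≤ (cOf p y)⁻¹ * (4 * (Apart p n)⁻¹) := by
      rw [← le_div_iff₀' hcy] at h2
      rw [div_eq_inv_mul] at h2
      calc v p n y ≤ (cOf p y)⁻¹ * theta p n := h2
      _ ≤ (cOf p y)⁻¹ * (4 * (Apart p n)⁻¹) :=
        mul_le_mul_of_nonneg_left hθ (by positivity)
    have : v p n x ≤ ρ⁻¹ * v p n y := by
      rw [← le_div_iff₀' hρ] at h1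
      rwa [div_eq_inv_mul] at h1
    calc v p n x ≤ ρ⁻¹ * v p n y := this
    _ ≤ ρ⁻¹ * ((cOf p y)⁻¹ * (4 * (Apart p n)⁻¹)) :=
      mul_le_mul_of_nonneg_left hvy (by positivity)
    _ = (ρ * cOf p y)⁻¹ * (4 * (Apart p n)⁻¹) := by
      rw [mul_inv]
      ring
  have hto : Tendsto (fun n => (ρ * cOf p y)⁻¹ * (4 * (Apart p n)⁻¹)) atTop (nhds 0) := by
    have : Tendsto (fun n => (Apart p n)⁻¹) atTop (nhds 0) := hA.inv_tendsto_atTop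
    have h4 : Tendsto (fun n => 4 * (Apart p n)⁻¹) atTop (nhds (4 * 0)) :=
      this.const_mul 4
    have h5 := h4.const_mul ((ρ * cOf p y)⁻¹)
    simpa using h5
  refine squeeze_zero' (Filter.eventually_atTop.mpr ⟨N, fun n _ => v_nonneg hp1 hp2 n x⟩)
    (Filter.eventually_atTop.mpr ⟨N, hub⟩) hto

/-- `u m x → 0` as `m → ∞`. -/
lemma u_to_zero (hp1 : ∀ j, 0 < p j) (hp2 : ∀ j, p j ≤ 1/2)
    (hpmin : ∃ j1, p j1 < 1/2)
    (hA : Tendsto (fun n => Apart p n) atTop atTop) (x : V) :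
    Tendsto (fun m => u p m x) atTop (nhds 0) := by
  have key : ∀ z : V, z ≠ O → Tendsto (fun m => u p m z) atTop (nhds 0) := by
    intro z hz
    have hanti : Antitone fun m => u p m z :=
      antitone_nat_of_succ_le fun m => u_anti hp1 hp2 m z
    have hbdd : BddBelow (Set.range fun m => u p m z) :=
      ⟨0, by rintro t ⟨m, rfl⟩; exact u_nonneg hp1 hp2 m z⟩
    have hconv : Tendsto (fun m => u p m z) atTop (nhds (⨅ m, u p m z)) :=
      tendsto_atTop_ciInf hanti hbdd
    have hc0 : (⨅ m, u p m z) = 0 := by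
      have hge : 0 ≤ ⨅ m, u p m z :=
        le_ciInf fun m => u_nonneg hp1 hp2 m z
      have hle : ∀ n : ℕ, (⨅ m, u p m z) ≤ v p n z := by
        intro n
        have h1 : ∀ m, u p m z ≤ w p n m z := by
          intro m
          have := u_le_w hp1 hp2 n m z
          rwa [Zf, if_neg hz] at this
        refine le_ciInf fun m => le_trans (ciInf_le hbdd m) (h1 m)
      have hv := v_to_zero hp1 hp2 hpmin hA hz
      have := ge_of_tendsto hv (Filter.eventually_atTop.mpr ⟨0, fun n _ => hle n⟩)
      exact le_antisymm this hge
    rwa [hc0] at hconv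
  by_cases hx : x = O
  · subst hx
    have hsh : Tendsto (fun m => u p (m+1) O) atTop (nhds 0) := by
      have e : ∀ m, u p (m+1) O = L p (Zf (u p m)) O := fun m => rfl
      have hO1 : ((0:ℤ)+1, (0:ℤ)) ≠ O := ne_O_iff.mpr (by omega)
      have hO2 : ((0:ℤ)-1, (0:ℤ)) ≠ O := ne_O_iff.mpr (by omega)
      have hO3 : ((0:ℤ), (0:ℤ)+1) ≠ O := ne_O_iff.mpr (by omega)
      have hO4 : ((0:ℤ), (0:ℤ)-1) ≠ O := ne_O_iff.mpr (by omega)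
      have t1 := key _ hO1
      have t2 := key _ hO2
      have t3 := key _ hO3
      have t4 := key _ hO4
      have e2 : ∀ m, L p (Zf (u p m)) O =
          (1/2 - p 0) * (u p m ((0:ℤ)+1, (0:ℤ)) + u p m ((0:ℤ)-1, (0:ℤ))) +
          p 0 * (u p m ((0:ℤ), (0:ℤ)+1) + u p m ((0:ℤ), (0:ℤ)-1)) := by
        intro m
        show L p (Zf (u p m)) (0, 0) = _
        unfold L Zf
        rw [if_neg hO1, if_neg hO2, if_neg hO3, if_neg hO4]
      have hcomb : Tendsto (fun m =>
          (1/2 - p 0) * (u p m ((0:ℤ)+1, (0:ℤ)) + u p m ((0:ℤ)-1, (0:ℤ))) +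
          p 0 * (u p m ((0:ℤ), (0:ℤ)+1) + u p m ((0:ℤ), (0:ℤ)-1))) atTop (nhds 0) := by
        have := ((t1.add t2).const_mul (1/2 - p 0)).add ((t3.add t4).const_mul (p 0))
        simpa using this
      refine Tendsto.congr (fun m => ?_) hcomb
      rw [e m, e2 m]
    exact (tendsto_add_atTop_iff_nat (f := fun m => u p m O) (l := nhds 0) 1).mp hsh
  · exact key x hx

end Limits

section TransProb

lemma prodne {a b c d : ℤ} (h : ¬(a = c ∧ b = d)) : ((a,b) : V) ≠ (c,d) := by
  intro hc
  exact h ⟨congrArg Prod.fst hc, congrArg Prod.snd hc⟩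

lemma q_r (x : V) : aniTransProb p x (x.1+1, x.2) = 1/2 - p x.2 := by
  unfold aniTransProb
  rw [if_pos (Or.inl rfl)]

lemma q_l (x : V) : aniTransProb p x (x.1-1, x.2) = 1/2 - p x.2 := by
  unfold aniTransProb
  rw [if_pos (Or.inr rfl)]

lemma q_u (x : V) : aniTransProb p x (x.1, x.2+1) = p x.2 := by
  unfold aniTransProb
  rw [if_neg, if_pos (Or.inl rfl)]
  rintro (h | h) <;> exact absurd (congrArg Prod.fst h) (by omega)

lemma q_d (x : V) : aniTransProb p x (x.1, x.2-1) = p x.2 := by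
  unfold aniTransProb
  rw [if_neg, if_pos (Or.inr rfl)]
  rintro (h | h) <;> exact absurd (congrArg Prod.fst h) (by omega)

/-- the four neighbours of `x` -/
def nbhdF (x : V) : Finset V :=
  {(x.1+1, x.2), (x.1-1, x.2), (x.1, x.2+1), (x.1, x.2-1)}

lemma q_not {x y : V} (h : y ∉ nbhdF x) : aniTransProb p x y = 0 := by
  unfold nbhdF at h
  simp only [Finset.mem_insert, Finset.mem_singleton] at h
  push_neg at h
  unfold aniTransProb
  rw [if_neg, if_neg]
  · rintro (hc | hc)
    · exact h.2.2.1 hc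
    · exact h.2.2.2 hc
  · rintro (hc | hc)
    · exact h.1 hc
    · exact h.2.1 hc

lemma q_nonneg' (hp1 : ∀ j, 0 < p j) (hp2 : ∀ j, p j ≤ 1/2) (x y : V) :
    0 ≤ aniTransProb p x y := by
  unfold aniTransProb
  split
  · linarith [hp2 x.2]
  · split
    · exact (hp1 x.2).le
    · exact le_rfl

lemma sum_nbhdF {M : Type*} [AddCommMonoid M] (f : V → M) (x : V) :
    ∑ y ∈ nbhdF x, f y =
      f (x.1+1, x.2) + f (x.1-1, x.2) + f (x.1, x.2+1) + f (x.1, x.2-1) := by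
  unfold nbhdF
  rw [Finset.sum_insert (by
    simp only [Finset.mem_insert, Finset.mem_singleton]
    push_neg
    refine ⟨prodne ?_, prodne ?_, prodne ?_⟩ <;> intro hc <;> omega)]
  rw [Finset.sum_insert (by
    simp only [Finset.mem_insert, Finset.mem_singleton]
    push_neg
    refine ⟨prodne ?_, prodne ?_⟩ <;> intro hc <;> omega)]
  rw [Finset.sum_insert (by
    simp only [Finset.mem_singleton]
    refine prodne ?_
    intro hc
    omega)]
  rw [Finset.sum_singleton]
  abel

lemma L_eq_sum (f : V → ℝ) (x : V) :
    L p f x = ∑ y ∈ nbhdF x, aniTransProb p x y * f y := by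
  rw [sum_nbhdF, q_r, q_l, q_u, q_d]
  unfold L
  ring

end TransProb

section UE

open ENNReal

variable (p)

/-- ENNReal transition kernel -/
def qE (x y : V) : ℝ≥0∞ := ENNReal.ofReal (aniTransProb p x y)

/-- ENNReal avoidance function -/
def uE : ℕ → V → ℝ≥0∞
  | 0 => fun _ => 1
  | (m+1) => fun x => ∑' y : {y : V // y ≠ O}, qE p x y * uE m y

variable {p}

lemma uE_le (hp1 : ∀ j, 0 < p j) (hp2 : ∀ j, p j ≤ 1/2) :
    ∀ m x, uE p m x ≤ ENNReal.ofReal (u p m x) := by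
  intro m
  induction m with
  | zero =>
    intro x
    show (1:ℝ≥0∞) ≤ ENNReal.ofReal (1:ℝ)
    simp
  | succ m ih =>
    intro x
    show ∑' y : {y : V // y ≠ O}, qE p x y * uE p m y ≤ _
    have step1 : ∑' y : {y : V // y ≠ O}, qE p x y * uE p m y ≤
        ∑' y : {y : V // y ≠ O}, qE p x y * ENNReal.ofReal (u p m y) :=
      ENNReal.tsum_le_tsum fun y => mul_le_mul_right (ih y) _
    refine le_trans step1 (le_of_eq ?_)
    have step2 : ∑' y : {y : V // y ≠ O}, qE p x y * ENNReal.ofReal (u p m y) =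
        ∑' y : V, Set.indicator {y : V | y ≠ O}
          (fun y => qE p x y * ENNReal.ofReal (u p m y)) y := by
      exact tsum_subtype {y : V | y ≠ O} (fun y => qE p x y * ENNReal.ofReal (u p m y))
    rw [step2]
    have step3 : ∑' y : V, Set.indicator {y : V | y ≠ O}
          (fun y => qE p x y * ENNReal.ofReal (u p m y)) y =
        ∑ y ∈ nbhdF x, Set.indicator {y : V | y ≠ O}
          (fun y => qE p x y * ENNReal.ofReal (u p m y)) y := by
      refine tsum_eq_sum fun y hy => ?_
      rw [Set.indicator_apply]
      split
      · unfold qE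
        rw [q_not hy, ENNReal.ofReal_zero, zero_mul]
      · rfl
    rw [step3]
    have step4 : ∀ y : V, Set.indicator {y : V | y ≠ O}
          (fun y => qE p x y * ENNReal.ofReal (u p m y)) y =
        ENNReal.ofReal (aniTransProb p x y * Zf (u p m) y) := by
      intro y
      rw [Set.indicator_apply]
      by_cases hy : y = O
      · rw [if_neg (by simp [hy]), hy]
        unfold Zf
        rw [if_pos rfl, mul_zero, ENNReal.ofReal_zero]
      · rw [if_pos (by simpa using hy)]
        unfold qE Zf
        rw [if_neg hy, ← ENNReal.ofReal_mul (q_nonneg' hp1 hp2 x y)]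
    rw [Finset.sum_congr rfl fun y _ => step4 y]
    rw [← ENNReal.ofReal_sum_of_nonneg fun y _ =>
      mul_nonneg (q_nonneg' hp1 hp2 x y) (by
        unfold Zf
        split
        · exact le_rfl
        · exact u_nonneg hp1 hp2 m y)]
    congr 1
    rw [← L_eq_sum]
    rfl

lemma uE_le_one (hp1 : ∀ j, 0 < p j) (hp2 : ∀ j, p j ≤ 1/2) (m : ℕ) (x : V) :
    uE p m x ≤ 1 := by
  refine le_trans (uE_le hp1 hp2 m x) ?_
  rw [ENNReal.ofReal_le_one]
  exact u_le_one hp1 hp2 m x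

lemma uE_to_zero (hp1 : ∀ j, 0 < p j) (hp2 : ∀ j, p j ≤ 1/2)
    (hpmin : ∃ j1, p j1 < 1/2)
    (hA : Tendsto (fun n => Apart p n) atTop atTop) (x : V) :
    Tendsto (fun m => uE p m x) atTop (nhds 0) := by
  have h1 : Tendsto (fun m => ENNReal.ofReal (u p m x)) atTop (nhds 0) := by
    have := ENNReal.tendsto_ofReal (u_to_zero hp1 hp2 hpmin hA x)
    simpa using this
  exact tendsto_of_tendsto_of_tendsto_of_le_of_le tendsto_const_nhds h1
    (fun m => zero_le) (fun m => uE_le hp1 hp2 m x)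

end UE

section Meas

open MeasureTheory
open scoped ENNReal

variable {Ω : Type*} [MeasurableSpace Ω] {P : Measure Ω} {C : ℕ → Ω → V}

/-- cylinder event -/
def Acyl (C : ℕ → Ω → V) (s : ℕ) (g : ℕ → V) : Set Ω := {ω | ∀ i ≤ s, C i ω = g i}

lemma measurable_singleton_V (y : V) : MeasurableSet ({y} : Set V) :=
  measurableSet_singleton y

lemma measAcyl (hm : ∀ n, Measurable (C n)) (s : ℕ) (g : ℕ → V) :
    MeasurableSet (Acyl C s g) := by
  have : Acyl C s g = ⋂ (i : ℕ) (_ : i ≤ s), (C i) ⁻¹' {g i} := by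
    ext ω; simp [Acyl]
  rw [this]
  exact MeasurableSet.iInter fun i => MeasurableSet.iInter fun _ =>
    (hm i) (measurable_singleton_V (g i))

/-- the fundamental estimate: the conditional probability of avoiding the
origin for `m` further steps is at most `uE p m` at the current position. -/
lemma lemA (hw : IsAnisotropicWalk p P C) :
    ∀ (m M : ℕ) (g : ℕ → V),
      P (Acyl C M g ∩ {ω | ∀ i, M < i → i ≤ M + m → C i ω ≠ O})
        ≤ P (Acyl C M g) * uE p m (g M) := by
  intro m
  induction m with
  | zero =>
    intro M g
    have hset : {ω : Ω | ∀ i, M < i → i ≤ M + 0 → C i ω ≠ O} = Set.univ := by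
      ext ω
      simp only [Set.mem_setOf_eq, Set.mem_univ, iff_true]
      intro i h1 h2
      omega
    rw [hset, Set.inter_univ]
    show _ ≤ _ * uE p 0 (g M)
    have : uE p 0 (g M) = 1 := rfl
    rw [this, mul_one]
  | succ m ih =>
    intro M g
    have hcover : Acyl C M g ∩ {ω | ∀ i, M < i → i ≤ M + (m+1) → C i ω ≠ O} ⊆
        ⋃ (y : {y : V // y ≠ O}),
          (Acyl C (M+1) (Function.update g (M+1) (y:V)) ∩
            {ω | ∀ i, M+1 < i → i ≤ (M+1) + m → C i ω ≠ O}) := by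
      rintro ω ⟨h1, h2⟩
      have hy : C (M+1) ω ≠ O := h2 (M+1) (by omega) (by omega)
      refine Set.mem_iUnion.mpr ⟨⟨C (M+1) ω, hy⟩, ⟨?_, ?_⟩⟩
      · intro i hi
        rcases Nat.lt_or_ge i (M+1) with h' | h'
        · rw [Function.update_of_ne (by omega)]
          exact h1 i (by omega)
        · have : i = M+1 := by omega
          subst this
          rw [Function.update_self]
      · intro i ha hb
        exact h2 i (by omega) (by omega)
    have hpieces : ∀ y : {y : V // y ≠ O},
        P (Acyl C (M+1) (Function.update g (M+1) (y:V)) ∩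
            {ω | ∀ i, M+1 < i → i ≤ (M+1) + m → C i ω ≠ O})
          ≤ (qE p (g M) y * uE p m y) * P (Acyl C M g) := by
      intro y
      have hstep : P (Acyl C (M+1) (Function.update g (M+1) (y:V)))
          = qE p (g M) (y:V) * P (Acyl C M g) := by
        have h := hw.step M (Function.update g (M+1) (y:V)) (y:V)
        have hs1 : {ω | (∀ i ≤ M, C i ω = Function.update g (M+1) (y:V) i) ∧
            C (M + 1) ω = (y:V)} = Acyl C (M+1) (Function.update g (M+1) (y:V)) := by
          ext ω
          simp only [Set.mem_setOf_eq, Acyl]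
          constructor
          · rintro ⟨ha, hb⟩ i hi
            rcases Nat.lt_or_ge i (M+1) with h' | h'
            · exact ha i (by omega)
            · have : i = M+1 := by omega
              subst this
              rw [Function.update_self]
              exact hb
          · intro ha
            refine ⟨fun i hi => ha i (by omega), ?_⟩
            have := ha (M+1) le_rfl
            rwa [Function.update_self] at this
        have hs2 : {ω | ∀ i ≤ M, C i ω = Function.update g (M+1) (y:V) i}
            = Acyl C M g := by
          ext ω
          simp only [Set.mem_setOf_eq, Acyl]
          constructor
          · intro hh i hi
            have := hh i hi
            rwa [Function.update_of_ne (by omega)] at this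
          · intro hh i hi
            rw [Function.update_of_ne (by omega)]
            exact hh i hi
        have hg'M : Function.update g (M+1) (y:V) M = g M :=
          Function.update_of_ne (by omega) _ _
        rw [hs1, hs2, hg'M] at h
        exact h
      calc P (Acyl C (M+1) (Function.update g (M+1) (y:V)) ∩
            {ω | ∀ i, M+1 < i → i ≤ (M+1) + m → C i ω ≠ O})
          ≤ P (Acyl C (M+1) (Function.update g (M+1) (y:V))) *
            uE p m (Function.update g (M+1) (y:V) (M+1)) := ih (M+1) _
      _ = (qE p (g M) y * uE p m y) * P (Acyl C M g) := by
          rw [hstep, Function.update_self]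
          ring
    calc P (Acyl C M g ∩ {ω | ∀ i, M < i → i ≤ M + (m+1) → C i ω ≠ O})
        ≤ P (⋃ (y : {y : V // y ≠ O}),
          (Acyl C (M+1) (Function.update g (M+1) (y:V)) ∩
            {ω | ∀ i, M+1 < i → i ≤ (M+1) + m → C i ω ≠ O})) := measure_mono hcover
    _ ≤ ∑' y : {y : V // y ≠ O},
          P (Acyl C (M+1) (Function.update g (M+1) (y:V)) ∩
            {ω | ∀ i, M+1 < i → i ≤ (M+1) + m → C i ω ≠ O}) := measure_iUnion_le _
    _ ≤ ∑' y : {y : V // y ≠ O}, (qE p (g M) y * uE p m y) * P (Acyl C M g) :=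
        ENNReal.tsum_le_tsum hpieces
    _ = (∑' y : {y : V // y ≠ O}, qE p (g M) y * uE p m y) * P (Acyl C M g) :=
        ENNReal.tsum_mul_right
    _ = P (Acyl C M g) * uE p (m+1) (g M) := by
        rw [mul_comm]
        rfl

variable (C)

/-- extension of a finite path -/
def extg (M : ℕ) (g : Fin (M+1) → V) : ℕ → V :=
  fun i => if h : i ≤ M then g ⟨i, by omega⟩ else O

variable {C}

lemma avoid_bound (hw : IsAnisotropicWalk p P C) (M m : ℕ) :
    P {ω | ∀ i, M < i → i ≤ M + m → C i ω ≠ O}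
      ≤ ∑' g : (Fin (M+1) → V), P (Acyl C M (extg M g)) * uE p m (extg M g M) := by
  have hcover : {ω | ∀ i, M < i → i ≤ M + m → C i ω ≠ O} ⊆
      ⋃ (g : Fin (M+1) → V), (Acyl C M (extg M g) ∩
        {ω | ∀ i, M < i → i ≤ M + m → C i ω ≠ O}) := by
    intro ω hω
    refine Set.mem_iUnion.mpr ⟨fun i => C i ω, ⟨?_, hω⟩⟩
    intro i hi
    unfold extg
    rw [dif_pos hi]
  calc P {ω | ∀ i, M < i → i ≤ M + m → C i ω ≠ O}
      ≤ ∑' g : (Fin (M+1) → V), P (Acyl C M (extg M g) ∩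
        {ω | ∀ i, M < i → i ≤ M + m → C i ω ≠ O}) :=
      le_trans (measure_mono hcover) (measure_iUnion_le _)
  _ ≤ ∑' g : (Fin (M+1) → V), P (Acyl C M (extg M g)) * uE p m (extg M g M) :=
      ENNReal.tsum_le_tsum fun g => lemA hw m M (extg M g)

lemma sum_acyl_le_one [IsProbabilityMeasure P] (hw : IsAnisotropicWalk p P C) (M : ℕ) :
    ∑' g : (Fin (M+1) → V), P (Acyl C M (extg M g)) ≤ 1 := by
  have hdisj : Pairwise (Function.onFun Disjoint
      fun g : Fin (M+1) → V => Acyl C M (extg M g)) := by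
    intro g g' hne
    refine Set.disjoint_left.mpr fun ω h1 h2 => hne ?_
    funext i
    have e1 := h1 i (by omega)
    have e2 := h2 i (by omega)
    unfold extg at e1 e2
    rw [dif_pos (by omega : (i:ℕ) ≤ M)] at e1 e2
    have : g ⟨(i:ℕ), by omega⟩ = g' ⟨(i:ℕ), by omega⟩ := by rw [← e1, ← e2]
    simpa using this
  rw [← measure_iUnion hdisj fun g => measAcyl hw.meas M (extg M g)]
  exact prob_le_one

/-- probability of never returning to the origin after time `M` is zero. -/
lemma avoid_zero [IsProbabilityMeasure P]
    (hp1 : ∀ j, 0 < p j) (hp2 : ∀ j, p j ≤ 1/2) (hpmin : ∃ j1, p j1 < 1/2)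
    (hA : Tendsto (fun n => Apart p n) atTop atTop)
    (hw : IsAnisotropicWalk p P C) (M : ℕ) :
    P {ω | ∀ i, M < i → C i ω ≠ O} = 0 := by
  set a : (Fin (M+1) → V) → ℝ≥0∞ := fun g => P (Acyl C M (extg M g)) with ha
  have hsum : ∑' g, a g ≤ 1 := sum_acyl_le_one hw M
  have hPbound : ∀ m : ℕ, P {ω | ∀ i, M < i → C i ω ≠ O}
      ≤ ∑' g : (Fin (M+1) → V), a g * uE p m (extg M g M) := by
    intro m
    refine le_trans (measure_mono fun ω hω => ?_) (avoid_bound hw M m)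
    intro i h1 h2
    exact hω i h1
  by_contra hP0
  have hpos : 0 < P {ω | ∀ i, M < i → C i ω ≠ O} := pos_iff_ne_zero.mpr hP0
  -- choose a finite set G with small tail
  have htail := ENNReal.tendsto_tsum_compl_atTop_zero
    (f := a) (by
      intro hc
      rw [hc] at hsum
      exact absurd hsum (by simp))
  have hev := htail.eventually_lt_const (by
      exact ENNReal.half_pos hP0 : (0:ℝ≥0∞) < P {ω | ∀ i, M < i → C i ω ≠ O} / 2)
  obtain ⟨G, hG⟩ := hev.exists
  set T := ∑' g : {g : Fin (M+1) → V // g ∉ G}, a g with hT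
  -- split the sum
  have hsplit : ∀ m, ∑' g : (Fin (M+1) → V), a g * uE p m (extg M g M)
      ≤ (∑ g ∈ G, a g * uE p m (extg M g M)) + T := by
    intro m
    have h1 : ∑' g : (Fin (M+1) → V), a g * uE p m (extg M g M) =
        (∑' g : {g : Fin (M+1) → V // g ∈ G}, a g * uE p m (extg M (g:Fin (M+1) → V) M)) +
        (∑' g : {g : Fin (M+1) → V // g ∉ G},
          a g * uE p m (extg M (g:Fin (M+1) → V) M)) := by
      exact (Summable.tsum_add_tsum_compl (s := {g | g ∈ G}) ENNReal.summable ENNReal.summable).symm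
    rw [h1]
    refine add_le_add (le_of_eq ?_) ?_
    · exact Finset.tsum_subtype G (fun g => a g * uE p m (extg M g M))
    · refine ENNReal.tsum_le_tsum fun g => ?_
      calc a g * uE p m (extg M (g:Fin (M+1) → V) M)
          ≤ a g * 1 := mul_le_mul_right (uE_le_one hp1 hp2 _ _) _
      _ = a g := mul_one _
  -- the finite sum tends to zero
  have hfin : Tendsto (fun m => ∑ g ∈ G, a g * uE p m (extg M g M)) atTop (nhds 0) := by
    have : Tendsto (fun m => ∑ g ∈ G, a g * uE p m (extg M g M)) atTop
        (nhds (∑ g ∈ G, 0)) := by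
      refine tendsto_finset_sum G fun g _ => ?_
      have hu := uE_to_zero hp1 hp2 hpmin hA (extg M g M)
      have hane : a g ≠ ⊤ := by
        refine ne_of_lt (lt_of_le_of_lt (measure_mono (Set.subset_univ _)) ?_)
        rw [measure_univ]
        exact ENNReal.one_lt_top
      have := ENNReal.Tendsto.const_mul hu (Or.inr hane)
      simpa using this
    simpa using this
  -- conclude
  have hle : P {ω | ∀ i, M < i → C i ω ≠ O} ≤ T := by
    have hev2 : Tendsto (fun m => (∑ g ∈ G, a g * uE p m (extg M g M)) + T)
        atTop (nhds (0 + T)) := hfin.add tendsto_const_nhds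
    rw [zero_add] at hev2
    refine ge_of_tendsto hev2 (Filter.Eventually.of_forall fun m => ?_)
    exact le_trans (hPbound m) (hsplit m)
  have : P {ω | ∀ i, M < i → C i ω ≠ O} ≤
      P {ω | ∀ i, M < i → C i ω ≠ O} / 2 := le_trans hle hG.le
  have hne : P {ω | ∀ i, M < i → C i ω ≠ O} ≠ ⊤ := by
    refine ne_of_lt (lt_of_le_of_lt (measure_mono (Set.subset_univ _)) ?_)
    rw [measure_univ]
    exact ENNReal.one_lt_top
  exact absurd this (not_le.mpr (ENNReal.half_lt_self hP0 hne))

end Meas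

end Aniso
end

open Aniso in
private lemma anisotropic_recurrent_aux {Ω : Type*} [MeasurableSpace Ω]
    (P : MeasureTheory.Measure Ω) [MeasureTheory.IsProbabilityMeasure P]
    (p : ℤ → ℝ) (C : ℕ → Ω → ℤ × ℤ)
    (hp1 : ∀ j, 0 < p j) (hp2 : ∀ j, p j ≤ 1 / 2) (hpmin : ∃ j, p j < 1 / 2)
    (hwalk : IsAnisotropicWalk p P C)
    (hdiv : ¬ Summable fun k : ℕ =>
      (∑ j ∈ Finset.Icc (-(k : ℤ)) (k : ℤ), (p j)⁻¹)⁻¹) :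
    ∀ᵐ ω ∂P, {N : ℕ | C N ω = (0, 0)}.Infinite := by
  have hdiv' : ¬ Summable fun k : ℕ => (Crow p k)⁻¹ := hdiv
  have hnn : ∀ k : ℕ, 0 ≤ (Crow p k)⁻¹ := fun k => inv_nonneg.mpr (Crow_pos hp1 k).le
  have hS : Filter.Tendsto (fun n => ∑ k ∈ Finset.range n, (Crow p k)⁻¹)
      Filter.atTop Filter.atTop :=
    (not_summable_iff_tendsto_nat_atTop_of_nonneg hnn).mp hdiv'
  have hA : Filter.Tendsto (fun n => Apart p n) Filter.atTop Filter.atTop := by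
    have := hS.comp (tendsto_add_atTop_nat 1)
    exact this
  rw [MeasureTheory.ae_iff]
  have hsub : {ω | ¬ ({N : ℕ | C N ω = (0,0)}).Infinite} ⊆
      ⋃ (M : ℕ), {ω | ∀ i, M < i → C i ω ≠ O} := by
    intro ω hω
    simp only [Set.mem_setOf_eq, Set.not_infinite] at hω
    obtain ⟨M, hM⟩ := hω.bddAbove
    refine Set.mem_iUnion.mpr ⟨M, fun i hi hc => ?_⟩
    have : i ≤ M := hM (show i ∈ {N : ℕ | C N ω = (0,0)} from hc)
    omega
  refine MeasureTheory.measure_mono_null hsub ?_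
  exact MeasureTheory.measure_iUnion_null fun M => avoid_zero hp1 hp2 hpmin hA hwalk M

noncomputable section

/-- The anisotropic random walk on `ℤ²` with parameters `p`
is recurrent (almost surely it returns to the origin infinitely often)
provided that `∑_{k=0}^{∞} (∑_{j=-k}^{k} 1/p j)⁻¹ = ∞`. -/
theorem anisotropic_recurrent {Ω : Type*} [MeasurableSpace Ω]
    (P : Measure Ω) [IsProbabilityMeasure P]
    (p : ℤ → ℝ) (C : ℕ → Ω → ℤ × ℤ)
    (hp1 : ∀ j, 0 < p j) (hp2 : ∀ j, p j ≤ 1 / 2) (hpmin : ∃ j, p j < 1 / 2)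
    (hwalk : IsAnisotropicWalk p P C)
    (hdiv : ¬ Summable fun k : ℕ =>
      (∑ j ∈ Finset.Icc (-(k : ℤ)) (k : ℤ), (p j)⁻¹)⁻¹) :
    ∀ᵐ ω ∂P, {N : ℕ | C N ω = (0, 0)}.Infinite := by
  exact anisotropic_recurrent_aux P p C hp1 hp2 hpmin hwalk hdiv

end
end

section
/- Let S be a simple symmetric random walk and let r(m), m = 1,2,..., be a sequence of nonnegative integer-valued random variables independent of S such that r(m) >= m^{beta} almost surely for all large enough m, where beta > 2. Then for all small enough epsilon > 0, almost surely for all large enough m, |S(r(m))| >= m^{beta/2 - 1 - epsilon}. -/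
open MeasureTheory ProbabilityTheory Filter Asymptotics Set
open scoped ENNReal

noncomputable section

section Aux

/-- Path-counting function of the simple random walk. -/
private def walkC : ℕ → ℤ → ℕ
  | 0, k => if k = 0 then 1 else 0
  | (n+1), k => walkC n (k-1) + walkC n (k+1)

private lemma walkC_main (n : ℕ) (k : ℤ) :
    walkC n k ≤ n.choose (((n : ℤ) + k).toNat / 2) ∧
      ((¬ (2 ∣ ((n : ℤ) + k)) ∨ k < -(n:ℤ) ∨ (n:ℤ) < k) → walkC n k = 0) := by
  induction n generalizing k with
  | zero =>
    constructor
    · simp only [walkC]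
      split
      · subst ‹k = 0›; simp
      · simp
    · intro h
      simp only [walkC]
      split
      · subst ‹k = 0›; simp at h
      · rfl
  | succ n ih =>
    have h1 := ih (k - 1)
    have h2 := ih (k + 1)
    have hcast : ((↑(n+1) : ℤ) + k) = ((n:ℤ) + 1 + k) := by push_cast; ring
    constructor
    · -- inequality
      rw [hcast]
      by_cases hpar : (2 : ℤ) ∣ ((n:ℤ) + 1 + k)
      · by_cases hlow : k < -((n:ℤ)+1)
        · have e1 : walkC n (k-1) = 0 := h1.2 (by omega)
          have e2 : walkC n (k+1) = 0 := h2.2 (by omega)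
          simp [walkC, e1, e2]
        · by_cases hk : k = -((n:ℤ)+1)
          · have e1 : walkC n (k-1) = 0 := h1.2 (by omega)
            have e2 : walkC n (k+1) ≤ n.choose (((n:ℤ) + (k+1)).toNat / 2) := h2.1
            have h0 : ((n:ℤ) + (k+1)).toNat / 2 = 0 := by omega
            rw [h0] at e2
            have h0' : (((n:ℤ)+1) + k).toNat / 2 = 0 := by omega
            rw [h0']
            simp only [walkC, e1, Nat.zero_add]
            simpa using e2
          · -- now  -(n-1) ≤ k  (by parity, k ≠ -n), and j ≥ 1
            have hj : ∃ j : ℕ, (((n:ℤ)+1) + k).toNat / 2 = j + 1 ∧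
                ((n:ℤ) + (k-1)).toNat / 2 = j ∧ ((n:ℤ) + (k+1)).toNat / 2 = j + 1 := by
              refine ⟨(((n:ℤ)+1) + k).toNat / 2 - 1, by omega, by omega, by omega⟩
            obtain ⟨j, hj1, hj2, hj3⟩ := hj
            rw [hj1]
            rw [hj2] at h1; rw [hj3] at h2
            calc walkC (n+1) k = walkC n (k-1) + walkC n (k+1) := rfl
              _ ≤ n.choose j + n.choose (j+1) := Nat.add_le_add h1.1 h2.1
              _ = (n+1).choose (j+1) := (Nat.choose_succ_succ n j).symm
      · have e1 : walkC n (k-1) = 0 := h1.2 (by omega)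
        have e2 : walkC n (k+1) = 0 := h2.2 (by omega)
        simp [walkC, e1, e2]
    · rw [hcast]
      intro h
      have e1 : walkC n (k-1) = 0 := h1.2 (by omega)
      have e2 : walkC n (k+1) = 0 := h2.2 (by omega)
      simp [walkC, e1, e2]

private lemma walkC_le_middle (n : ℕ) (k : ℤ) : walkC n k ≤ n.choose (n / 2) :=
  le_trans (walkC_main n k).1 (Nat.choose_le_middle _ n)

private lemma centralBinom_sq_bound (m : ℕ) :
    ((2*m).choose m : ℝ)^2 * (3*m+1) ≤ 16^m := by
  induction m with
  | zero => norm_num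
  | succ m ih =>
    have key := Nat.succ_mul_centralBinom_succ m
    have key' : ((m:ℝ) + 1) * ((2*(m+1)).choose (m+1) : ℝ) = 2 * (2*m+1) * ((2*m).choose m : ℝ) := by
      have := congrArg (fun x : ℕ => (x : ℝ)) key
      simp only [Nat.centralBinom] at this
      push_cast at this
      convert this using 2 <;> ring_nf
    have hm1 : (0:ℝ) < (m:ℝ) + 1 := by positivity
    have hc : ((2*(m+1)).choose (m+1) : ℝ) = 2 * (2*m+1) * ((2*m).choose m : ℝ) / ((m:ℝ)+1) := by
      field_simp at key' ⊢; linarith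
    push_cast
    rw [hc]
    have hnn : (0:ℝ) ≤ ((2*m).choose m : ℝ) := by positivity
    have h16 : (0:ℝ) < 16^m := by positivity
    rw [div_pow, div_mul_eq_mul_div, div_le_iff₀ (by positivity)]
    have expand : (2 * (2*(m:ℝ)+1) * ((2*m).choose m : ℝ))^2 * (3*((m:ℝ)+1)+1)
        = ((2*m).choose m : ℝ)^2 * (3*m+1) * (4*(2*(m:ℝ)+1)^2*(3*(m:ℝ)+4)/(3*(m:ℝ)+1)) := by
      field_simp
      ring
    rw [expand]
    have hfrac : (4*(2*(m:ℝ)+1)^2*(3*(m:ℝ)+4)/(3*(m:ℝ)+1)) ≤ 16 * ((m:ℝ)+1)^2 := by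
      rw [div_le_iff₀ (by positivity)]
      nlinarith [Nat.cast_nonneg (α := ℝ) m]
    calc ((2*m).choose m : ℝ)^2 * (3*(m:ℝ)+1) * (4*(2*(m:ℝ)+1)^2*(3*(m:ℝ)+4)/(3*(m:ℝ)+1))
        ≤ 16^m * (16 * ((m:ℝ)+1)^2) := by
          apply mul_le_mul ih hfrac (by positivity) (by positivity)
      _ = 16^(m+1) * ((m:ℝ)+1)^2 := by rw [pow_succ]; ring

private lemma middle_bound (n : ℕ) :
    (n.choose (n/2) : ℝ) * Real.sqrt (n+1) ≤ 2^(n+1) := by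
  have sqle : ∀ a b : ℝ, 0 ≤ a → 0 ≤ b → ∀ c : ℝ, 0 ≤ c → a^2 * b ≤ c^2 → a * Real.sqrt b ≤ c := by
    intro a b ha hb c hc h
    have : a * Real.sqrt b = Real.sqrt (a^2 * b) := by
      rw [Real.sqrt_mul (by positivity), Real.sqrt_sq ha]
    rw [this]
    calc Real.sqrt (a^2*b) ≤ Real.sqrt (c^2) := Real.sqrt_le_sqrt h
      _ = c := Real.sqrt_sq hc
  rcases Nat.even_or_odd n with ⟨m, hm⟩ | ⟨m, hm⟩
  · subst hm
    have h2 : (m+m)/2 = m := by omega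
    rw [h2]
    apply sqle _ _ (by positivity) (by positivity) _ (by positivity)
    have hcb := centralBinom_sq_bound m
    have h2m : ((2*m).choose m : ℝ) = ((m+m).choose m : ℝ) := by norm_num [two_mul]
    rw [h2m] at hcb
    have h16 : ((2:ℝ)^(m+m+1))^2 = 4 * 16^m := by
      rw [show (16:ℝ) = 2^4 by norm_num, ← pow_mul, ← pow_mul,
        show (m+m+1)*2 = 4*m+2 by ring, pow_add]
      ring
    have hle : ((m:ℝ)+m+1) ≤ 4*(3*(m:ℝ)+1) := by
      have : (0:ℝ) ≤ (m:ℝ) := Nat.cast_nonneg m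
      linarith
    push_cast
    push_cast at hcb
    nlinarith [sq_nonneg (((m+m).choose m : ℝ)), Nat.cast_nonneg (α := ℝ) ((m+m).choose m)]
  · subst hm
    rcases Nat.eq_zero_or_pos m with rfl | hm
    · norm_num
      have h4 : Real.sqrt 4 = 2 := by
        rw [show (4:ℝ) = 2^2 by norm_num, Real.sqrt_sq]; norm_num
      calc Real.sqrt 2 ≤ Real.sqrt 4 := Real.sqrt_le_sqrt (by norm_num)
        _ = 2 := h4
        _ ≤ 4 := by norm_num
    have h2 : (2*m+1)/2 = m := by omega
    rw [h2]
    apply sqle _ _ (by positivity) (by positivity) _ (by positivity)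
    have hm' : m - 1 + 1 = m := by omega
    have hsplit : (2*m+1).choose m = (2*m).choose m + (2*m).choose (m-1) := by
      calc (2*m+1).choose m = (2*m+1).choose (m-1+1) := by rw [hm']
        _ = (2*m).choose (m-1) + (2*m).choose (m-1+1) := Nat.choose_succ_succ _ _
        _ = (2*m).choose m + (2*m).choose (m-1) := by rw [hm']; ring
    have hmid : (2*m).choose (m-1) ≤ (2*m).choose m := by
      have h := Nat.choose_le_middle (m-1) (2*m)
      have h2' : (2*m)/2 = m := by omega
      rwa [h2'] at h
    have hle : ((2*m+1).choose m : ℝ) ≤ 2 * ((2*m).choose m : ℝ) := by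
      rw [hsplit]; push_cast
      have : ((2*m).choose (m-1) : ℝ) ≤ ((2*m).choose m : ℝ) := by exact_mod_cast hmid
      linarith
    have hcb := centralBinom_sq_bound m
    have h16 : ((2:ℝ)^(2*m+1+1))^2 = 16 * 16^m := by
      rw [show (16:ℝ) = 2^4 by norm_num, ← pow_mul, ← pow_mul,
        show (2*m+1+1)*2 = 4*m+4 by ring, pow_add]
      ring
    have hle2 : (2*(m:ℝ)+1+1) ≤ 4*(3*(m:ℝ)+1) := by
      have : (0:ℝ) ≤ (m:ℝ) := Nat.cast_nonneg m
      linarith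
    have hc'sq : ((2*m+1).choose m : ℝ)^2 ≤ 4 * ((2*m).choose m : ℝ)^2 := by
      nlinarith [Nat.cast_nonneg (α := ℝ) ((2*m+1).choose m), Nat.cast_nonneg (α := ℝ) ((2*m).choose m)]
    push_cast
    push_cast at hc'sq hcb
    nlinarith [sq_nonneg (((2*m).choose m : ℝ)), Nat.cast_nonneg (α := ℝ) ((2*m).choose m),
      mul_le_mul_of_nonneg_left hle2 (sq_nonneg (((2*m+1).choose m : ℝ))),
      mul_le_mul_of_nonneg_right hc'sq (show (0:ℝ) ≤ 4*(3*(m:ℝ)+1) by positivity)]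

open scoped ENNReal

variable {Ω : Type*} [MeasurableSpace Ω] {P : Measure Ω} [IsProbabilityMeasure P]
  {S : ℕ → Ω → ℤ}

private lemma X_meas (hS : IsSSRW P S) (n : ℕ) : Measurable (fun ω => S (n+1) ω - S n ω) :=
  (hS.meas (n+1)).sub (hS.meas n)

private lemma S_eq_sum (hS : IsSSRW P S) (n : ℕ) (ω : Ω) :
    S n ω = ∑ i ∈ Finset.range n, (S (i+1) ω - S i ω) := by
  induction n with
  | zero => simp [hS.init]
  | succ n ih => rw [Finset.sum_range_succ, ← ih]; ring

private lemma X_other_null (hS : IsSSRW P S) (n : ℕ) :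
    P {ω | ¬ (S (n+1) ω - S n ω = 1 ∨ S (n+1) ω - S n ω = -1)} = 0 := by
  set X := fun ω => S (n+1) ω - S n ω with hX
  have hm : Measurable X := X_meas hS n
  have hm1 : MeasurableSet {ω | X ω = 1} := hm (measurableSet_singleton 1)
  have hm2 : MeasurableSet {ω | X ω = -1} := hm (measurableSet_singleton (-1))
  have hp : P {ω | X ω = 1} = 1/2 := hS.plus n
  have hq : P {ω | X ω = -1} = 1/2 := hS.minus n
  have hdj : Disjoint {ω | X ω = 1} {ω | X ω = -1} := by
    rw [Set.disjoint_left]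
    rintro ω h1 h2
    simp only [mem_setOf_eq] at h1 h2
    omega
  have hu : P ({ω | X ω = 1} ∪ {ω | X ω = -1}) = 1 := by
    rw [measure_union hdj hm2, hp, hq, ENNReal.div_add_div_same]
    rw [one_add_one_eq_two]
    exact ENNReal.div_self (by norm_num) (by norm_num : (2:ℝ≥0∞) ≠ ⊤)
  have : {ω | ¬ (X ω = 1 ∨ X ω = -1)} = ({ω | X ω = 1} ∪ {ω | X ω = -1})ᶜ := by
    ext ω; simp [not_or]
  rw [this]
  rw [prob_compl_eq_zero_iff (hm1.union hm2)]
  exact hu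

private lemma S_indep_X (hS : IsSSRW P S) (n : ℕ) :
    IndepFun (S n) (fun ω => S (n+1) ω - S n ω) P := by
  have h := hS.indep.indepFun_finsetSum_of_notMem
    (fun i => X_meas hS i) (s := Finset.range n) (i := n) (by simp)
  have : S n = ∑ j ∈ Finset.range n, (fun ω => S (j+1) ω - S j ω) := by
    funext ω
    rw [Finset.sum_apply]
    exact S_eq_sum hS n ω
  rwa [← this] at h

private lemma step_law (hS : IsSSRW P S) (n : ℕ) (k : ℤ) :
    P {ω | S (n+1) ω = k}
      = P {ω | S n ω = k - 1} * 2⁻¹ + P {ω | S n ω = k + 1} * 2⁻¹ := by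
  set X := fun ω => S (n+1) ω - S n ω with hX
  have hm : Measurable X := X_meas hS n
  set A := {ω | S n ω = k - 1} ∩ {ω | X ω = 1} with hA
  set B := {ω | S n ω = k + 1} ∩ {ω | X ω = -1} with hB
  set N := {ω | ¬ (X ω = 1 ∨ X ω = -1)} with hN
  have hNnull : P N = 0 := X_other_null hS n
  have hmA : MeasurableSet A :=
    (hS.meas n (measurableSet_singleton _)).inter (hm (measurableSet_singleton _))
  have hmB : MeasurableSet B :=
    (hS.meas n (measurableSet_singleton _)).inter (hm (measurableSet_singleton _))
  have hsub : {ω | S (n+1) ω = k} ⊆ A ∪ B ∪ N := by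
    intro ω hω
    simp only [mem_setOf_eq] at hω
    by_cases h1 : X ω = 1
    · left; left
      constructor
      · simp only [mem_setOf_eq]
        have : S (n+1) ω - S n ω = 1 := h1
        omega
      · exact h1
    · by_cases h2 : X ω = -1
      · left; right
        constructor
        · simp only [mem_setOf_eq]
          have : S (n+1) ω - S n ω = -1 := h2
          omega
        · exact h2
      · right; simp only [hN, mem_setOf_eq]; tauto
  have hsup : A ∪ B ⊆ {ω | S (n+1) ω = k} := by
    rintro ω (⟨h1, h2⟩ | ⟨h1, h2⟩) <;>
      · simp only [mem_setOf_eq] at h1 h2 ⊢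
        have : S (n+1) ω - S n ω = _ := h2
        omega
  have hdisj : Disjoint A B := by
    rw [Set.disjoint_left]
    rintro ω ⟨_, h1⟩ ⟨_, h2⟩
    simp only [mem_setOf_eq] at h1 h2
    omega
  have hp : P {ω | X ω = 1} = 1/2 := hS.plus n
  have hq : P {ω | X ω = -1} = 1/2 := hS.minus n
  have hPA : P A = P {ω | S n ω = k - 1} * 2⁻¹ := by
    have h := (S_indep_X hS n).measure_inter_preimage_eq_mul {k-1} {1}
      (measurableSet_singleton _) (measurableSet_singleton _)
    have h' : P A = P {ω | S n ω = k - 1} * P {ω | X ω = 1} := h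
    rw [h', hp]
    norm_num
  have hPB : P B = P {ω | S n ω = k + 1} * 2⁻¹ := by
    have h := (S_indep_X hS n).measure_inter_preimage_eq_mul {k+1} {-1}
      (measurableSet_singleton _) (measurableSet_singleton _)
    have h' : P B = P {ω | S n ω = k + 1} * P {ω | X ω = -1} := h
    rw [h', hq]
    norm_num
  have hle : P {ω | S (n+1) ω = k} ≤ P A + P B := by
    calc P {ω | S (n+1) ω = k} ≤ P (A ∪ B ∪ N) := measure_mono hsub
      _ ≤ P (A ∪ B) + P N := measure_union_le _ _
      _ = P (A ∪ B) := by rw [hNnull, add_zero]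
      _ ≤ P A + P B := measure_union_le _ _
  have hge : P A + P B ≤ P {ω | S (n+1) ω = k} := by
    rw [← measure_union hdisj hmB]
    exact measure_mono hsup
  rw [← hPA, ← hPB]
  exact le_antisymm hle hge

private lemma walk_law (hS : IsSSRW P S) (n : ℕ) (k : ℤ) :
    P {ω | S n ω = k} = (walkC n k : ℝ≥0∞) * 2⁻¹ ^ n := by
  induction n generalizing k with
  | zero =>
    by_cases hk : k = 0
    · subst hk
      have : {ω | S 0 ω = 0} = Set.univ := by
        ext ω; simp [hS.init ω]
      rw [this]
      simp [walkC]
    · have : {ω | S 0 ω = k} = ∅ := by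
        ext ω; simp [hS.init ω]; omega
      rw [this]
      simp [walkC, hk]
  | succ n ih =>
    rw [step_law hS n k, ih (k-1), ih (k+1)]
    show _ = ((walkC n (k-1) + walkC n (k+1) : ℕ) : ℝ≥0∞) * 2⁻¹ ^ (n+1)
    push_cast
    ring

private lemma point_bound (hS : IsSSRW P S) (n : ℕ) (k : ℤ) :
    P {ω | S n ω = k} ≤ ENNReal.ofReal (2 / Real.sqrt (n+1)) := by
  rw [walk_law hS n k]
  have h1 : (walkC n k : ℝ≥0∞) * 2⁻¹ ^ n = ENNReal.ofReal ((walkC n k : ℝ) * 2⁻¹ ^ n) := by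
    rw [ENNReal.ofReal_mul (by positivity), ENNReal.ofReal_pow (by norm_num),
      ENNReal.ofReal_natCast]
    congr 1
    rw [show ((2:ℝ)⁻¹) = (1:ℝ)/2 by norm_num]
    rw [ENNReal.ofReal_div_of_pos (by norm_num)]
    norm_num
  rw [h1]
  apply ENNReal.ofReal_le_ofReal
  have hsq : (0:ℝ) < Real.sqrt (n+1) := Real.sqrt_pos.mpr (by positivity)
  have hc : (walkC n k : ℝ) ≤ (n.choose (n/2) : ℝ) := by
    exact_mod_cast walkC_le_middle n k
  have hmb := middle_bound n
  have key : (walkC n k : ℝ) * Real.sqrt (n+1) * 2⁻¹ ^ n ≤ 2 := by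
    have h1 : (walkC n k : ℝ) * Real.sqrt (n+1) ≤ 2^(n+1) :=
      le_trans (mul_le_mul_of_nonneg_right hc hsq.le) hmb
    have h2 : (0:ℝ) < 2⁻¹ ^ n := by positivity
    calc (walkC n k : ℝ) * Real.sqrt (n+1) * 2⁻¹ ^ n ≤ 2^(n+1) * 2⁻¹ ^ n :=
        mul_le_mul_of_nonneg_right h1 h2.le
      _ = 2 := by
          rw [pow_succ, mul_right_comm, ← mul_pow]
          norm_num
  rw [le_div_iff₀ hsq]
  have heq : (walkC n k : ℝ) * 2⁻¹^n * Real.sqrt (n+1)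
      = (walkC n k : ℝ) * Real.sqrt (n+1) * 2⁻¹^n := by ring
  rw [heq]
  exact key

private lemma interval_bound (hS : IsSSRW P S) (n : ℕ) (x : ℝ) (hx : 0 ≤ x) :
    P {ω | |((S n ω : ℤ) : ℝ)| < x}
      ≤ ENNReal.ofReal ((2*x+3) * (2 / Real.sqrt (n+1))) := by
  classical
  set K : Finset ℤ := Finset.Icc (-⌈x⌉) ⌈x⌉ with hK
  have hsub : {ω | |((S n ω : ℤ) : ℝ)| < x} ⊆ ⋃ k ∈ K, {ω | S n ω = k} := by
    intro ω hω
    simp only [mem_setOf_eq] at hω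
    have h1 : ((|S n ω| : ℤ) : ℝ) < (⌈x⌉ : ℝ) + 1 := by
      push_cast
      calc |((S n ω : ℤ) : ℝ)| < x := hω
        _ ≤ ⌈x⌉ := Int.le_ceil x
        _ < (⌈x⌉ : ℝ) + 1 := by linarith
    have h2 : |S n ω| ≤ ⌈x⌉ := by exact_mod_cast Int.lt_add_one_iff.mp (by exact_mod_cast h1)
    simp only [Set.mem_iUnion]
    exact ⟨S n ω, by simp [hK, Finset.mem_Icc, abs_le.mp h2], rfl⟩
  have hcard : ((K.card : ℕ) : ℝ) ≤ 2*x + 3 := by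
    rw [hK, Int.card_Icc]
    have hc0 : (0:ℤ) ≤ ⌈x⌉ := Int.ceil_nonneg hx
    have : ((⌈x⌉ + 1 - -⌈x⌉).toNat : ℤ) = 2*⌈x⌉ + 1 := by omega
    have hcast : (((⌈x⌉ + 1 - -⌈x⌉).toNat : ℕ) : ℝ) = 2*(⌈x⌉:ℝ) + 1 := by
      exact_mod_cast congrArg (fun z : ℤ => (z : ℝ)) this
    rw [hcast]
    have := Int.ceil_le_floor_add_one x
    have hle : (⌈x⌉ : ℝ) ≤ x + 1 := by
      calc (⌈x⌉ : ℝ) ≤ ⌊x⌋ + 1 := by exact_mod_cast this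
        _ ≤ x + 1 := by linarith [Int.floor_le x]
    linarith
  calc P {ω | |((S n ω : ℤ) : ℝ)| < x} ≤ P (⋃ k ∈ K, {ω | S n ω = k}) := measure_mono hsub
    _ ≤ ∑ k ∈ K, P {ω | S n ω = k} := measure_biUnion_finset_le K _
    _ ≤ ∑ _k ∈ K, ENNReal.ofReal (2 / Real.sqrt (n+1)) :=
        Finset.sum_le_sum (fun k _ => point_bound hS n k)
    _ = (K.card : ℝ≥0∞) * ENNReal.ofReal (2 / Real.sqrt (n+1)) := by
        rw [Finset.sum_const, nsmul_eq_mul]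
    _ ≤ ENNReal.ofReal (2*x+3) * ENNReal.ofReal (2 / Real.sqrt (n+1)) := by
        apply mul_le_mul_left
        rw [← ENNReal.ofReal_natCast]
        exact ENNReal.ofReal_le_ofReal hcard
    _ = ENNReal.ofReal ((2*x+3) * (2 / Real.sqrt (n+1))) := by
        rw [← ENNReal.ofReal_mul (by linarith)]

end Aux

/-- Let `S` be a simple symmetric random walk and `r m`,
`m = 1, 2, …`, nonnegative integer-valued random variables independent of `S`
with `r m ≥ m ^ β` a.s. for all large `m`, where `β > 2`.  Then for all small
enough `ε > 0`, almost surely for all large `m`,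
`|S (r m)| ≥ m ^ (β/2 - 1 - ε)`. -/
theorem ssrw_at_independent_time_lower_bound {Ω : Type*} [MeasurableSpace Ω]
    (P : Measure Ω) [IsProbabilityMeasure P]
    (S : ℕ → Ω → ℤ) (hS : IsSSRW P S)
    (r : ℕ → Ω → ℕ) (hrmeas : ∀ m, Measurable (r m))
    (hindep : IndepFun (fun ω (m : ℕ) => r m ω) (fun ω (n : ℕ) => S n ω) P)
    (β : ℝ) (hβ : 2 < β)
    (hr : ∀ᵐ ω ∂P, ∀ᶠ m : ℕ in atTop, (m : ℝ) ^ β ≤ (r m ω : ℝ)) :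
    ∃ ε₀ > (0 : ℝ), ∀ ε : ℝ, 0 < ε → ε < ε₀ →
      ∀ᵐ ω ∂P, ∀ᶠ m : ℕ in atTop,
        (m : ℝ) ^ (β / 2 - 1 - ε) ≤ |((S (r m ω) ω : ℤ) : ℝ)| := by
  refine ⟨β/2 - 1, by linarith, ?_⟩
  intro ε hε hεlt
  set α := β/2 - 1 - ε with hα
  have hα_pos : 0 < α := by rw [hα]; linarith
  set A : ℕ → Set Ω := fun m =>
    {ω | ((m:ℝ)^β ≤ (r m ω : ℝ)) ∧ |((S (r m ω) ω : ℤ) : ℝ)| < (m:ℝ)^α} with hAdef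
  -- key bound
  have key : ∀ m : ℕ, 1 ≤ m → P (A m) ≤ ENNReal.ofReal (10 * (m:ℝ)^(-(1+ε))) := by
    intro m hm
    have hm0 : (0:ℝ) < m := by exact_mod_cast hm
    have hm1 : (1:ℝ) ≤ m := by exact_mod_cast hm
    set x := (m:ℝ)^α with hx
    have hx0 : (0:ℝ) ≤ x := Real.rpow_nonneg hm0.le α
    have hx1 : (1:ℝ) ≤ x := Real.one_le_rpow hm1 hα_pos.le
    set C : ℕ → Set Ω := fun n =>
      {ω | r m ω = n ∧ (m:ℝ)^β ≤ (n:ℝ) ∧ |((S n ω : ℤ) : ℝ)| < x} with hCdef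
    have hsub : A m ⊆ ⋃ n : ℕ, C n := by
      intro ω hω
      obtain ⟨h1, h2⟩ := hω
      exact Set.mem_iUnion.mpr ⟨r m ω, rfl, h1, h2⟩
    set D : ℝ≥0∞ := ENNReal.ofReal ((2*x+3) * (2 / (m:ℝ)^(β/2))) with hD
    have hmb2 : (0:ℝ) < (m:ℝ)^(β/2) := Real.rpow_pos_of_pos hm0 _
    have hCbound : ∀ n : ℕ, P (C n) ≤ P {ω | r m ω = n} * D := by
      intro n
      by_cases hcond : (m:ℝ)^β ≤ (n:ℝ)
      · have hCeq : C n = {ω | r m ω = n} ∩ {ω | |((S n ω : ℤ) : ℝ)| < x} := by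
          ext ω; simp only [hCdef, mem_setOf_eq, Set.mem_inter_iff]; tauto
        have hms : MeasurableSet ((Function.eval m : (ℕ → ℕ) → ℕ) ⁻¹' {n}) :=
          (measurable_pi_apply m) (measurableSet_singleton n)
        have hmt : MeasurableSet ((Function.eval n : (ℕ → ℤ) → ℤ) ⁻¹' {z : ℤ | |(z:ℝ)| < x}) :=
          (measurable_pi_apply n) trivial
        have hprod := hindep.measure_inter_preimage_eq_mul _ _ hms hmt
        have hprod' : P ({ω | r m ω = n} ∩ {ω | |((S n ω : ℤ) : ℝ)| < x})
            = P {ω | r m ω = n} * P {ω | |((S n ω : ℤ) : ℝ)| < x} := hprod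
        rw [hCeq, hprod']
        apply mul_le_mul_right
        calc P {ω | |((S n ω : ℤ) : ℝ)| < x}
            ≤ ENNReal.ofReal ((2*x+3) * (2 / Real.sqrt (n+1))) := interval_bound hS n x hx0
          _ ≤ D := by
              apply ENNReal.ofReal_le_ofReal
              apply mul_le_mul_of_nonneg_left _ (by linarith)
              apply div_le_div_of_nonneg_left (by norm_num) hmb2
              calc (m:ℝ)^(β/2) = Real.sqrt ((m:ℝ)^β) := by
                    rw [Real.sqrt_eq_rpow, ← Real.rpow_mul hm0.le]
                    ring_nf
                _ ≤ Real.sqrt ((n:ℝ)+1) := Real.sqrt_le_sqrt (by linarith)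
      · have : C n = ∅ := by
          ext ω; simp only [hCdef, mem_setOf_eq, Set.mem_empty_iff_false, iff_false]
          tauto
        rw [this]
        simp
    have hTsum : ∑' n : ℕ, P {ω | r m ω = n} = 1 := by
      have hdisj : Pairwise (Function.onFun Disjoint (fun n : ℕ => {ω | r m ω = n})) := by
        intro i j hij
        rw [Function.onFun, Set.disjoint_left]
        rintro ω h1 h2
        simp only [mem_setOf_eq] at h1 h2
        omega
      have hmeas : ∀ n : ℕ, MeasurableSet {ω | r m ω = n} :=
        fun n => (hrmeas m) (measurableSet_singleton n)
      rw [← measure_iUnion hdisj hmeas]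
      have : ⋃ n : ℕ, {ω | r m ω = n} = Set.univ := by
        ext ω; simp
      rw [this]
      exact measure_univ
    have hDle : D ≤ ENNReal.ofReal (10 * (m:ℝ)^(-(1+ε))) := by
      apply ENNReal.ofReal_le_ofReal
      have h5 : 2*x + 3 ≤ 5*x := by linarith
      have step1 : (2*x+3) * (2 / (m:ℝ)^(β/2)) ≤ 5*x * (2 / (m:ℝ)^(β/2)) :=
        mul_le_mul_of_nonneg_right h5 (by positivity)
      have step2 : 5*x * (2 / (m:ℝ)^(β/2)) = 10 * ((m:ℝ)^α / (m:ℝ)^(β/2)) := by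
        rw [hx]; ring
      have step3 : (m:ℝ)^α / (m:ℝ)^(β/2) = (m:ℝ)^(-(1+ε)) := by
        rw [← Real.rpow_sub hm0]
        congr 1
        rw [hα]; ring
      calc (2*x+3) * (2 / (m:ℝ)^(β/2)) ≤ 5*x * (2 / (m:ℝ)^(β/2)) := step1
        _ = 10 * (m:ℝ)^(-(1+ε)) := by rw [step2, step3]
    calc P (A m) ≤ P (⋃ n : ℕ, C n) := measure_mono hsub
      _ ≤ ∑' n : ℕ, P (C n) := measure_iUnion_le C
      _ ≤ ∑' n : ℕ, P {ω | r m ω = n} * D := ENNReal.tsum_le_tsum hCbound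
      _ = (∑' n : ℕ, P {ω | r m ω = n}) * D := ENNReal.tsum_mul_right
      _ = D := by rw [hTsum, one_mul]
      _ ≤ ENNReal.ofReal (10 * (m:ℝ)^(-(1+ε))) := hDle
  -- summability
  set B : ℕ → ℝ≥0∞ := fun m =>
    (if m = 0 then 1 else 0) + ENNReal.ofReal (10 * (m:ℝ)^(-(1+ε))) with hB
  have hAB : ∀ m, P (A m) ≤ B m := by
    intro m
    rcases Nat.eq_zero_or_pos m with rfl | hm
    · simp only [hB, if_pos rfl]
      calc P (A 0) ≤ 1 := prob_le_one
        _ ≤ 1 + ENNReal.ofReal (10 * ((0:ℕ):ℝ)^(-(1+ε))) := le_self_add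
    · calc P (A m) ≤ ENNReal.ofReal (10 * (m:ℝ)^(-(1+ε))) := key m hm
        _ ≤ B m := le_add_self
  have hsummable : Summable (fun m : ℕ => 10 * (m:ℝ)^(-(1+ε))) := by
    have h1 : Summable (fun m : ℕ => ((m:ℝ)^(1+ε))⁻¹) :=
      Real.summable_nat_rpow_inv.mpr (by linarith)
    have h2 := h1.mul_left 10
    apply h2.congr
    intro m
    rw [Real.rpow_neg (Nat.cast_nonneg m)]
  have hBsum : ∑' m, B m ≠ ⊤ := by
    rw [hB]
    rw [ENNReal.tsum_add]
    have h1 : ∑' m : ℕ, (if m = 0 then (1:ℝ≥0∞) else 0) = 1 := tsum_ite_eq 0 1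
    rw [h1]
    rw [← ENNReal.ofReal_tsum_of_nonneg (fun m => by positivity) hsummable]
    exact ENNReal.add_ne_top.mpr ⟨ENNReal.one_ne_top, ENNReal.ofReal_ne_top⟩
  have htotal : ∑' m, P (A m) ≠ ⊤ :=
    ne_top_of_le_ne_top hBsum (ENNReal.tsum_le_tsum hAB)
  have BC := MeasureTheory.ae_eventually_notMem (μ := P) htotal
  filter_upwards [hr, BC] with ω h1 h2
  filter_upwards [h1, h2] with m hm1 hm2
  by_contra hcon
  push_neg at hcon
  exact hm2 ⟨hm1, hcon⟩

end
end
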